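/- Let G be a connected non-degenerate trigraph, and let G' be an antithickening of G with thickening map I such that: the sets I(v) of size at least 2 are exactly the parts of the inclusion-maximal square-connected homogeneous pairs of strong cliques of G, and for each such inclusion-maximal pair (A, B) there are semiadjacent vertices a, b of G' with I(a) = A and I(b) = B. Then G' is an optimal antithickening of G. -/

import Mathlib

/-- A trigraph on a vertex type `V`: a symmetric adjacency function with values in
`{1, 0, -1}`, zero on the diagonal, such that semiedges form a matching. -/
structure Trigraph (V : Type) where
  θ : V → V → ℤ
  range_mem : ∀ u v, θ u v = 1 ∨ θ u v = 0 ∨ θ u v = -1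
  symm : ∀ u v, θ u v = θ v u
  refl_zero : ∀ v, θ v v = 0
  semi_matching : ∀ u v w : V, u ≠ v → u ≠ w → v ≠ w → θ u v = 0 → θ u w ≠ 0

namespace Trigraph

variable {V V' V'' : Type}

/-- `u` and `v` are strongly adjacent. -/
def StrongAdj (G : Trigraph V) (u v : V) : Prop := G.θ u v = 1

/-- Distinct `u` and `v` are semiadjacent. -/
def SemiAdj (G : Trigraph V) (u v : V) : Prop := u ≠ v ∧ G.θ u v = 0

/-- Distinct `u` and `v` are adjacent. -/
def Adj (G : Trigraph V) (u v : V) : Prop := u ≠ v ∧ (G.θ u v = 1 ∨ G.θ u v = 0)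

/-- Distinct `u` and `v` are antiadjacent. -/
def AntiAdj (G : Trigraph V) (u v : V) : Prop := u ≠ v ∧ (G.θ u v = 0 ∨ G.θ u v = -1)

/-- `u` and `v` are strongly antiadjacent. -/
def StrongAntiAdj (G : Trigraph V) (u v : V) : Prop := G.θ u v = -1

/-- `X` is strongly complete to `Y`. -/
def StronglyComplete (G : Trigraph V) (X Y : Set V) : Prop :=
  ∀ u ∈ X, ∀ v ∈ Y, G.StrongAdj u v

/-- `X` is strongly anticomplete to `Y`. -/
def StronglyAnticomplete (G : Trigraph V) (X Y : Set V) : Prop :=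
  ∀ u ∈ X, ∀ v ∈ Y, G.StrongAntiAdj u v

/-- A strong clique: pairwise strongly adjacent vertices. -/
def IsStrongClique (G : Trigraph V) (K : Set V) : Prop := K.Pairwise G.StrongAdj

/-- A stable set: pairwise antiadjacent vertices. -/
def IsStableSet (G : Trigraph V) (S : Set V) : Prop := S.Pairwise G.AntiAdj

/-- The neighbourhood of a vertex: the set of vertices adjacent to it. -/
def neighborhood (G : Trigraph V) (v : V) : Set V := {u | G.Adj v u}

/-- Claw-free: no vertex has three pairwise antiadjacent vertices in its neighbourhood. -/
def ClawFree (G : Trigraph V) : Prop :=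
  ¬ ∃ v a b c : V, G.Adj v a ∧ G.Adj v b ∧ G.Adj v c ∧
    G.AntiAdj a b ∧ G.AntiAdj a c ∧ G.AntiAdj b c

/-- Cobipartite: the vertex set is the union of two strong cliques. -/
def Cobipartite (G : Trigraph V) : Prop :=
  ∃ K1 K2 : Set V, G.IsStrongClique K1 ∧ G.IsStrongClique K2 ∧ K1 ∪ K2 = Set.univ

/-- Quasi-line: the neighbourhood of every vertex is the union of two strong cliques. -/
def QuasiLine (G : Trigraph V) : Prop :=
  ∀ v : V, ∃ K1 K2 : Set V, G.IsStrongClique K1 ∧ G.IsStrongClique K2 ∧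
    G.neighborhood v = K1 ∪ K2

/-- Connected: any two vertices are joined by a sequence of consecutively adjacent vertices. -/
def Connected (G : Trigraph V) : Prop :=
  ∀ u v : V, Relation.ReflTransGen G.Adj u v

/-- Non-degenerate: quasi-line and not cobipartite, or claw-free with stability number ≥ 3. -/
def NonDegenerate (G : Trigraph V) : Prop :=
  (G.QuasiLine ∧ ¬ G.Cobipartite) ∨
  (G.ClawFree ∧ ∃ S : Set V, G.IsStableSet S ∧ 3 ≤ S.ncard)

/-- A homogeneous set: `|V| > |X| ≥ 2` and every vertex outside `X` is strongly complete
or strongly anticomplete to `X`. -/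
def HomogeneousSet (G : Trigraph V) (X : Set V) : Prop :=
  2 ≤ X.ncard ∧ X ≠ Set.univ ∧
  ∀ v ∉ X, G.StronglyComplete {v} X ∨ G.StronglyAnticomplete {v} X

/-- `v1 v2 v3 v4` is a square: the pairs `v1v3`, `v2v4` are antiadjacent and the other
four pairs are adjacent. -/
def IsSquare (G : Trigraph V) (v1 v2 v3 v4 : V) : Prop :=
  G.AntiAdj v1 v3 ∧ G.AntiAdj v2 v4 ∧
  G.Adj v1 v2 ∧ G.Adj v2 v3 ∧ G.Adj v3 v4 ∧ G.Adj v4 v1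

/-- `X` contains a square. -/
def HasSquareIn (G : Trigraph V) (X : Set V) : Prop :=
  ∃ v1 v2 v3 v4 : V, G.IsSquare v1 v2 v3 v4 ∧ ({v1, v2, v3, v4} : Set V) ⊆ X

/-- Homogeneous pair of strong cliques `(A, B)`. -/
def HPOSC (G : Trigraph V) (A B : Set V) : Prop :=
  A.Nonempty ∧ B.Nonempty ∧ Disjoint A B ∧
  G.IsStrongClique A ∧ G.IsStrongClique B ∧
  ¬ (∃ a b : V, A = {a} ∧ B = {b}) ∧
  ∀ v ∉ A ∪ B,
    (G.StronglyComplete {v} A ∨ G.StronglyAnticomplete {v} A) ∧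
    (G.StronglyComplete {v} B ∨ G.StronglyAnticomplete {v} B)

/-- Deletion-minimal homogeneous pair of strong cliques. -/
def DeletionMinimal (G : Trigraph V) (A B : Set V) : Prop :=
  G.HPOSC A B ∧ G.HasSquareIn (A ∪ B) ∧
  (∀ a ∈ A, ¬ G.StronglyComplete {a} B ∧ ¬ G.StronglyAnticomplete {a} B) ∧
  (∀ b ∈ B, ¬ G.StronglyComplete {b} A ∧ ¬ G.StronglyAnticomplete {b} A)

/-- There is a square contained in `X` intersecting both `S1` and `S2`. -/
def SquareMeets (G : Trigraph V) (X S1 S2 : Set V) : Prop :=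
  ∃ v1 v2 v3 v4 : V, G.IsSquare v1 v2 v3 v4 ∧ ({v1, v2, v3, v4} : Set V) ⊆ X ∧
    (({v1, v2, v3, v4} : Set V) ∩ S1).Nonempty ∧
    (({v1, v2, v3, v4} : Set V) ∩ S2).Nonempty

/-- Square-connected homogeneous pair of strong cliques. -/
def SquareConnected (G : Trigraph V) (A B : Set V) : Prop :=
  G.HPOSC A B ∧
  (∀ A' A'' : Set V, A'.Nonempty → A''.Nonempty → A' ∪ A'' = A → Disjoint A' A'' →
    G.SquareMeets (A ∪ B) A' A'') ∧
  (∀ B' B'' : Set V, B'.Nonempty → B''.Nonempty → B' ∪ B'' = B → Disjoint B' B'' →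
    G.SquareMeets (A ∪ B) B' B'')

/-- Inclusion-maximal square-connected homogeneous pair of strong cliques. -/
def MaxSquareConnected (G : Trigraph V) (A B : Set V) : Prop :=
  G.SquareConnected A B ∧
  ∀ A' B' : Set V, G.SquareConnected A' B' → A ⊆ A' → B ⊆ B' → A' = A ∧ B' = B

/-- Two homogeneous pairs have skew intersection if a part of one intersects both
parts of the other. -/
def SkewIntersection (A1 B1 A2 B2 : Set V) : Prop :=
  ((A1 ∩ A2).Nonempty ∧ (A1 ∩ B2).Nonempty) ∨
  ((B1 ∩ A2).Nonempty ∧ (B1 ∩ B2).Nonempty) ∨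
  ((A2 ∩ A1).Nonempty ∧ (A2 ∩ B1).Nonempty) ∨
  ((B2 ∩ A1).Nonempty ∧ (B2 ∩ B1).Nonempty)

/-- Laminar: contains no square-connected homogeneous pair of strong cliques. -/
def Laminar (G : Trigraph V) : Prop := ¬ ∃ A B : Set V, G.SquareConnected A B

/-- `G` is a thickening of `G'` via the map `I` (equivalently, `G'` is an antithickening
of `G`): the `I v` are nonempty strong cliques partitioning `V(G)` respecting adjacency. -/
def IsThickening (G : Trigraph V) (G' : Trigraph V') (I : V' → Set V) : Prop :=
  (∀ v : V', (I v).Nonempty ∧ G.IsStrongClique (I v)) ∧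
  (∀ u v : V', u ≠ v → Disjoint (I u) (I v)) ∧
  (⋃ v : V', I v) = Set.univ ∧
  ∀ u v : V', u ≠ v →
    (G'.StrongAdj u v → G.StronglyComplete (I u) (I v)) ∧
    (G'.StrongAntiAdj u v → G.StronglyAnticomplete (I u) (I v)) ∧
    (G'.SemiAdj u v →
      ¬ G.StronglyComplete (I u) (I v) ∧ ¬ G.StronglyAnticomplete (I u) (I v))

/-- `G'` (with thickening map `I`) is an optimal antithickening of `G`: it is a laminar
antithickening with the maximum possible number of vertices. -/
def OptimalAntithickening (G : Trigraph V) (G' : Trigraph V') (I : V' → Set V) : Prop :=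
  G.IsThickening G' I ∧ G'.Laminar ∧
  ∀ (W : Type) (H : Trigraph W) (J : W → Set V),
    G.IsThickening H J → H.Laminar → Nat.card W ≤ Nat.card V'

/-- Isomorphism of trigraphs. -/
def Isomorphic (G1 : Trigraph V) (G2 : Trigraph V') : Prop :=
  ∃ f : V ≃ V', ∀ u v : V, G2.θ (f u) (f v) = G1.θ u v

end Trigraph

namespace Trigraph

variable {V V' W : Type}

section Basics

variable {G : Trigraph V}

lemma Adj.ne {u v : V} (h : G.Adj u v) : u ≠ v := h.1
lemma AntiAdj.ne {u v : V} (h : G.AntiAdj u v) : u ≠ v := h.1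
lemma SemiAdj.ne {u v : V} (h : G.SemiAdj u v) : u ≠ v := h.1

lemma adj_iff {u v : V} : G.Adj u v ↔ u ≠ v ∧ G.θ u v ≠ -1 := by
  constructor
  · rintro ⟨hne, h | h⟩ <;> exact ⟨hne, by omega⟩
  · rintro ⟨hne, h⟩
    rcases G.range_mem u v with h1 | h1 | h1
    · exact ⟨hne, Or.inl h1⟩
    · exact ⟨hne, Or.inr h1⟩
    · exact absurd h1 h

lemma anti_iff {u v : V} : G.AntiAdj u v ↔ u ≠ v ∧ G.θ u v ≠ 1 := by
  constructor
  · rintro ⟨hne, h | h⟩ <;> exact ⟨hne, by omega⟩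
  · rintro ⟨hne, h⟩
    rcases G.range_mem u v with h1 | h1 | h1
    · exact absurd h1 h
    · exact ⟨hne, Or.inl h1⟩
    · exact ⟨hne, Or.inr h1⟩

lemma SemiAdj.symm {u v : V} (h : G.SemiAdj u v) : G.SemiAdj v u :=
  ⟨h.1.symm, by rw [G.symm]; exact h.2⟩

lemma Adj.symm {u v : V} (h : G.Adj u v) : G.Adj v u :=
  ⟨h.1.symm, by rw [G.symm]; exact h.2⟩

lemma AntiAdj.symm {u v : V} (h : G.AntiAdj u v) : G.AntiAdj v u :=
  ⟨h.1.symm, by rw [G.symm]; exact h.2⟩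

/-- matching at `u` : two semiedges at `u` are impossible. -/
lemma no_two_semi {u v w : V} (huv : u ≠ v) (huw : u ≠ w) (hvw : v ≠ w)
    (h1 : G.θ u v = 0) (h2 : G.θ u w = 0) : False :=
  G.semi_matching u v w huv huw hvw h1 h2

lemma clique_theta {K : Set V} (hK : G.IsStrongClique K) {x y : V}
    (hx : x ∈ K) (hy : y ∈ K) (hne : x ≠ y) : G.θ x y = 1 := hK hx hy hne

end Basics

section Thickening

variable {G : Trigraph V} {H : Trigraph W} {J : W → Set V}

lemma IsThickening.mem_ne (hth : G.IsThickening H J) {u v : W} (hne : u ≠ v)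
    {x y : V} (hx : x ∈ J u) (hy : y ∈ J v) : x ≠ y := by
  rintro rfl
  exact (hth.2.1 u v hne).ne_of_mem hx hy rfl

lemma IsThickening.class_eq (hth : G.IsThickening H J) {u v : W} {x : V}
    (hx : x ∈ J u) (hy : x ∈ J v) : u = v := by
  by_contra hne
  exact (hth.2.1 u v hne).ne_of_mem hx hy rfl

lemma IsThickening.exists_class (hth : G.IsThickening H J) (x : V) : ∃ w, x ∈ J w := by
  have : x ∈ ⋃ w, J w := by rw [hth.2.2.1]; trivial
  simpa using this

lemma IsThickening.clique_pair (hth : G.IsThickening H J) {w : W} {x y : V}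
    (hx : x ∈ J w) (hy : y ∈ J w) (hne : x ≠ y) : G.θ x y = 1 :=
  (hth.1 w).2 hx hy hne

/-- If some pair across two classes is not strongly antiadjacent, the classes are not
strongly antiadjacent. -/
lemma IsThickening.theta_ne_neg_one (hth : G.IsThickening H J) {u v : W} (hne : u ≠ v)
    {x y : V} (hx : x ∈ J u) (hy : y ∈ J v) (hxy : G.θ x y ≠ -1) : H.θ u v ≠ -1 := by
  intro h
  exact hxy (((hth.2.2.2 u v hne).2.1) h x hx y hy)

lemma IsThickening.theta_ne_one (hth : G.IsThickening H J) {u v : W} (hne : u ≠ v)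
    {x y : V} (hx : x ∈ J u) (hy : y ∈ J v) (hxy : G.θ x y ≠ 1) : H.θ u v ≠ 1 := by
  intro h
  exact hxy (((hth.2.2.2 u v hne).1) h x hx y hy)

lemma IsThickening.theta_eq_zero (hth : G.IsThickening H J) {u v : W} (hne : u ≠ v)
    {x y x' y' : V} (hx : x ∈ J u) (hy : y ∈ J v) (hxy : G.θ x y ≠ 1)
    (hx' : x' ∈ J u) (hy' : y' ∈ J v) (hxy' : G.θ x' y' ≠ -1) : H.θ u v = 0 := by
  rcases H.range_mem u v with h | h | h
  · exact absurd h (hth.theta_ne_one hne hx hy hxy)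
  · exact h
  · exact absurd h (hth.theta_ne_neg_one hne hx' hy' hxy')

lemma IsThickening.strongly_complete (hth : G.IsThickening H J) {u v : W} (hne : u ≠ v)
    (h : H.θ u v = 1) : G.StronglyComplete (J u) (J v) :=
  (hth.2.2.2 u v hne).1 h

lemma IsThickening.strongly_anticomplete (hth : G.IsThickening H J) {u v : W} (hne : u ≠ v)
    (h : H.θ u v = -1) : G.StronglyAnticomplete (J u) (J v) :=
  (hth.2.2.2 u v hne).2.1 h

/-- Witnesses for a semiedge between classes. -/
lemma IsThickening.semi_wits (hth : G.IsThickening H J) {u v : W} (hne : u ≠ v)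
    (h : H.θ u v = 0) :
    (∃ x ∈ J u, ∃ y ∈ J v, G.θ x y ≠ 1) ∧ (∃ x ∈ J u, ∃ y ∈ J v, G.θ x y ≠ -1) := by
  have := (hth.2.2.2 u v hne).2.2 ⟨hne, h⟩
  constructor
  · by_contra hc
    push_neg at hc
    exact this.1 fun x hx y hy => hc x hx y hy
  · by_contra hc
    push_neg at hc
    exact this.2 fun x hx y hy => hc x hx y hy

/-- Push an adjacency in `G` down to classes. -/
lemma IsThickening.adj_down (hth : G.IsThickening H J) {u v : W} (hne : u ≠ v)
    {x y : V} (hx : x ∈ J u) (hy : y ∈ J v) (h : G.Adj x y) : H.Adj u v := by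
  rw [adj_iff] at h ⊢
  exact ⟨hne, hth.theta_ne_neg_one hne hx hy h.2⟩

lemma IsThickening.anti_down (hth : G.IsThickening H J) {u v : W} (hne : u ≠ v)
    {x y : V} (hx : x ∈ J u) (hy : y ∈ J v) (h : G.AntiAdj x y) : H.AntiAdj u v := by
  rw [anti_iff] at h ⊢
  exact ⟨hne, hth.theta_ne_one hne hx hy h.2⟩

/-- Lift: if classes are strongly complete (θ' = 1) we get adjacency upstairs, etc. -/
lemma IsThickening.adj_up (hth : G.IsThickening H J) {u v : W} (h : H.Adj u v)
    (hnz : H.θ u v ≠ 0) {x y : V} (hx : x ∈ J u) (hy : y ∈ J v) : G.Adj x y := by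
  have h1 : H.θ u v = 1 := by rcases h.2 with h' | h' <;> omega
  have := hth.strongly_complete h.1 h1 x hx y hy
  exact ⟨hth.mem_ne h.1 hx hy, Or.inl this⟩

lemma IsThickening.anti_up (hth : G.IsThickening H J) {u v : W} (h : H.AntiAdj u v)
    (hnz : H.θ u v ≠ 0) {x y : V} (hx : x ∈ J u) (hy : y ∈ J v) : G.AntiAdj x y := by
  have h1 : H.θ u v = -1 := by rcases h.2 with h' | h' <;> omega
  have := hth.strongly_anticomplete h.1 h1 x hx y hy
  exact ⟨hth.mem_ne h.1 hx hy, Or.inr this⟩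

lemma IsThickening.semi_wit_adj (hth : G.IsThickening H J) {u v : W}
    (h : H.SemiAdj u v) : ∃ x ∈ J u, ∃ y ∈ J v, G.Adj x y := by
  obtain ⟨-, x, hx, y, hy, hxy⟩ := hth.semi_wits h.1 h.2
  exact ⟨x, hx, y, hy, adj_iff.2 ⟨hth.mem_ne h.1 hx hy, hxy⟩⟩

lemma IsThickening.semi_wit_anti (hth : G.IsThickening H J) {u v : W}
    (h : H.SemiAdj u v) : ∃ x ∈ J u, ∃ y ∈ J v, G.AntiAdj x y := by
  obtain ⟨⟨x, hx, y, hy, hxy⟩, -⟩ := hth.semi_wits h.1 h.2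
  exact ⟨x, hx, y, hy, anti_iff.2 ⟨hth.mem_ne h.1 hx hy, hxy⟩⟩

end Thickening

end Trigraph

namespace Trigraph

variable {V V' W : Type}

section Squares

variable {G : Trigraph V} {A B : Set V}

lemma disj_absurd {A B : Set V} (hd : Disjoint A B) {x : V} (hx : x ∈ A) (hx' : x ∈ B) :
    False := hd.ne_of_mem hx hx' rfl

lemma IsSquare.rotate {v1 v2 v3 v4 : V} (h : G.IsSquare v1 v2 v3 v4) :
    G.IsSquare v2 v3 v4 v1 :=
  ⟨h.2.1, h.1.symm, h.2.2.2.1, h.2.2.2.2.1, h.2.2.2.2.2, h.2.2.1⟩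

lemma IsSquare.reflect {v1 v2 v3 v4 : V} (h : G.IsSquare v1 v2 v3 v4) :
    G.IsSquare v1 v4 v3 v2 :=
  ⟨h.1, h.2.1.symm, h.2.2.2.2.2.symm, h.2.2.2.2.1.symm, h.2.2.2.1.symm, h.2.2.1.symm⟩

/-- An antiadjacent pair inside the union of two disjoint strong cliques is split. -/
lemma anti_split (hA : G.IsStrongClique A) (hB : G.IsStrongClique B) (hd : Disjoint A B)
    {x y : V} (h : G.AntiAdj x y) (hx : x ∈ A ∪ B) (hy : y ∈ A ∪ B) :
    (x ∈ A ∧ y ∈ B) ∨ (x ∈ B ∧ y ∈ A) := by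
  have hne := h.ne
  have hth : G.θ x y ≠ 1 := (anti_iff.1 h).2
  rcases hx with hx | hx <;> rcases hy with hy | hy
  · exact absurd (clique_theta hA hx hy hne) hth
  · exact Or.inl ⟨hx, hy⟩
  · exact Or.inr ⟨hx, hy⟩
  · exact absurd (clique_theta hB hx hy hne) hth

lemma square_norm1 (hA : G.IsStrongClique A) (hB : G.IsStrongClique B)
    (hd : Disjoint A B) {v1 v2 v3 v4 : V} (hsq : G.IsSquare v1 v2 v3 v4)
    (h2 : v2 ∈ A ∪ B) (h3 : v3 ∈ A ∪ B) (h4 : v4 ∈ A ∪ B)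
    (h1A : v1 ∈ A) {z' : V} (hz' : z' = v2 ∨ z' = v3 ∨ z' = v4) (hz'A : z' ∈ A) :
    ∃ b b', b ∈ B ∧ b' ∈ B ∧ G.IsSquare v1 z' b b' := by
  have h3B : v3 ∈ B := by
    rcases anti_split hA hB hd hsq.1 (Or.inl h1A) h3 with ⟨-, hb⟩ | ⟨hb, -⟩
    · exact hb
    · exact absurd h1A fun h => disj_absurd hd h hb
  rcases hz' with rfl | rfl | rfl
  · have h4B : v4 ∈ B := by
      rcases anti_split hA hB hd hsq.2.1 (Or.inl hz'A) h4 with ⟨-, hb⟩ | ⟨hb, -⟩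
      · exact hb
      · exact absurd hz'A fun h => disj_absurd hd h hb
    exact ⟨v3, v4, h3B, h4B, hsq⟩
  · exact absurd hz'A fun h => disj_absurd hd h h3B
  · have h2B : v2 ∈ B := by
      rcases anti_split hA hB hd hsq.2.1 h2 (Or.inl hz'A) with ⟨ha, hb⟩ | ⟨ha, -⟩
      · exact absurd hz'A fun h => disj_absurd hd h hb
      · exact ha
    exact ⟨v3, v2, h3B, h2B, hsq.reflect⟩

/-- Normalisation: any square in `A ∪ B` with two designated vertices of `A` can be
rewritten as `(z, z', b, b')` with `b, b' ∈ B`. -/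
lemma square_normalize (hA : G.IsStrongClique A) (hB : G.IsStrongClique B)
    (hd : Disjoint A B) {v1 v2 v3 v4 : V} (hsq : G.IsSquare v1 v2 v3 v4)
    (hsub : ({v1, v2, v3, v4} : Set V) ⊆ A ∪ B) {z z' : V}
    (hz : z ∈ ({v1, v2, v3, v4} : Set V)) (hz' : z' ∈ ({v1, v2, v3, v4} : Set V))
    (hzA : z ∈ A) (hz'A : z' ∈ A) (hne : z ≠ z') :
    ∃ b b', b ∈ B ∧ b' ∈ B ∧ G.IsSquare z z' b b' := by
  have m1 : v1 ∈ A ∪ B := hsub (by simp)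
  have m2 : v2 ∈ A ∪ B := hsub (by simp)
  have m3 : v3 ∈ A ∪ B := hsub (by simp)
  have m4 : v4 ∈ A ∪ B := hsub (by simp)
  simp only [Set.mem_insert_iff, Set.mem_singleton_iff] at hz hz'
  rcases hz with rfl | rfl | rfl | rfl
  · refine square_norm1 hA hB hd hsq m2 m3 m4 hzA ?_ hz'A
    rcases hz' with h | h | h | h
    · exact absurd h hne.symm
    · exact Or.inl h
    · exact Or.inr (Or.inl h)
    · exact Or.inr (Or.inr h)
  · refine square_norm1 hA hB hd hsq.rotate m3 m4 m1 hzA ?_ hz'A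
    rcases hz' with h | h | h | h
    · exact Or.inr (Or.inr h)
    · exact absurd h hne.symm
    · exact Or.inl h
    · exact Or.inr (Or.inl h)
  · refine square_norm1 hA hB hd hsq.rotate.rotate m4 m1 m2 hzA ?_ hz'A
    rcases hz' with h | h | h | h
    · exact Or.inr (Or.inl h)
    · exact Or.inr (Or.inr h)
    · exact absurd h hne.symm
    · exact Or.inl h
  · refine square_norm1 hA hB hd hsq.rotate.rotate.rotate m1 m2 m3 hzA ?_ hz'A
    rcases hz' with h | h | h | h
    · exact Or.inl h
    · exact Or.inr (Or.inl h)
    · exact Or.inr (Or.inr h)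
    · exact absurd h hne.symm

end Squares

end Trigraph

namespace Trigraph

variable {V V' W : Type}

section SCBasic

variable {G : Trigraph V} {A B : Set V}

lemma two_le_ncard_of_pair [Finite V] {s : Set V} {a b : V} (ha : a ∈ s) (hb : b ∈ s)
    (hne : a ≠ b) : 2 ≤ s.ncard := by
  have : 1 < s.ncard := (Set.one_lt_ncard s.toFinite).2 ⟨a, ha, b, hb, hne⟩
  omega

lemma exists_pair_of_two_le [Finite V] {s : Set V} (h : 2 ≤ s.ncard) :
    ∃ a ∈ s, ∃ b ∈ s, a ≠ b :=
  (Set.one_lt_ncard s.toFinite).1 (by omega)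

lemma HPOSC.swap (h : G.HPOSC A B) : G.HPOSC B A := by
  obtain ⟨h1, h2, h3, h4, h5, h6, h7⟩ := h
  refine ⟨h2, h1, h3.symm, h5, h4, ?_, ?_⟩
  · rintro ⟨b, a, hB, hA⟩
    exact h6 ⟨a, b, hA, hB⟩
  · intro v hv
    have := h7 v (by rwa [Set.union_comm])
    exact ⟨this.2, this.1⟩

lemma SquareMeets.mono_symm (h : G.SquareMeets X S1 S2) : G.SquareMeets X S2 S1 := by
  obtain ⟨v1, v2, v3, v4, hsq, hsub, h1, h2⟩ := h
  exact ⟨v1, v2, v3, v4, hsq, hsub, h2, h1⟩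

lemma SquareConnected.swap (h : G.SquareConnected A B) : G.SquareConnected B A := by
  obtain ⟨hp, hA, hB⟩ := h
  refine ⟨hp.swap, ?_, ?_⟩
  · intro B' B'' h1 h2 h3 h4
    have := hB B' B'' h1 h2 h3 h4
    rwa [Set.union_comm A B] at this
  · intro A' A'' h1 h2 h3 h4
    have := hA A' A'' h1 h2 h3 h4
    rwa [Set.union_comm A B] at this

lemma MaxSquareConnected.swap (h : G.MaxSquareConnected A B) : G.MaxSquareConnected B A := by
  refine ⟨h.1.swap, fun A' B' hsc hBA hAB => ?_⟩
  have := h.2 B' A' hsc.swap hAB hBA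
  exact ⟨this.2, this.1⟩

/-- The two vertices of a square in `A ∪ B` lying in `A` (given two elements of the
square known to be in `A`). -/
lemma square_two_in_each (hA : G.IsStrongClique A) (hB : G.IsStrongClique B)
    (hd : Disjoint A B) {v1 v2 v3 v4 : V} (hsq : G.IsSquare v1 v2 v3 v4)
    (hsub : ({v1, v2, v3, v4} : Set V) ⊆ A ∪ B) :
    (∃ x ∈ A, ∃ y ∈ A, x ≠ y ∧ x ∈ ({v1, v2, v3, v4} : Set V) ∧
      y ∈ ({v1, v2, v3, v4} : Set V)) ∧
    (∃ x ∈ B, ∃ y ∈ B, x ≠ y ∧ x ∈ ({v1, v2, v3, v4} : Set V) ∧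
      y ∈ ({v1, v2, v3, v4} : Set V)) := by
  have m1 : v1 ∈ A ∪ B := hsub (by simp)
  have m2 : v2 ∈ A ∪ B := hsub (by simp)
  have m3 : v3 ∈ A ∪ B := hsub (by simp)
  have m4 : v4 ∈ A ∪ B := hsub (by simp)
  have d1 := anti_split hA hB hd hsq.1 m1 m3
  have d2 := anti_split hA hB hd hsq.2.1 m2 m4
  have n12 : v1 ≠ v2 := hsq.2.2.1.ne
  have n14 : v4 ≠ v1 := hsq.2.2.2.2.2.ne
  have n32 : v2 ≠ v3 := hsq.2.2.2.1.ne
  have n34 : v3 ≠ v4 := hsq.2.2.2.2.1.ne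
  rcases d1 with ⟨h1A, h3B⟩ | ⟨h1B, h3A⟩ <;> rcases d2 with ⟨h2A, h4B⟩ | ⟨h2B, h4A⟩
  · exact ⟨⟨v1, h1A, v2, h2A, n12, by simp, by simp⟩,
      ⟨v3, h3B, v4, h4B, n34, by simp, by simp⟩⟩
  · exact ⟨⟨v1, h1A, v4, h4A, n14.symm, by simp, by simp⟩,
      ⟨v3, h3B, v2, h2B, n32.symm, by simp, by simp⟩⟩
  · exact ⟨⟨v3, h3A, v2, h2A, n32.symm, by simp, by simp⟩,
      ⟨v1, h1B, v4, h4B, n14.symm, by simp, by simp⟩⟩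
  · exact ⟨⟨v3, h3A, v4, h4A, n34, by simp, by simp⟩,
      ⟨v1, h1B, v2, h2B, n12, by simp, by simp⟩⟩
end SCBasic

end Trigraph

namespace Trigraph

variable {V V' W : Type}

section SCMore

variable [Finite V] {G : Trigraph V} {A B : Set V}

lemma nonsingleton_two_le {s : Set V} (hne : s.Nonempty) (h : ¬∃ a, s = {a}) :
    2 ≤ s.ncard := by
  obtain ⟨a, ha⟩ := hne
  by_contra hc
  refine h ⟨a, ?_⟩
  ext x
  simp only [Set.mem_singleton_iff]
  constructor
  · intro hx
    by_contra hxa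
    exact hc (two_le_ncard_of_pair hx ha hxa)
  · rintro rfl; exact ha

lemma singleton_union_diff {s : Set V} {a : V} (ha : a ∈ s) : {a} ∪ (s \ {a}) = s := by
  rw [Set.singleton_union, Set.insert_diff_singleton, Set.insert_eq_self.2 ha]

lemma sc_square_of_two {X Y : Set V} (h : G.SquareConnected X Y) (h2 : 2 ≤ Y.ncard) :
    ∃ v1 v2 v3 v4, G.IsSquare v1 v2 v3 v4 ∧ ({v1, v2, v3, v4} : Set V) ⊆ X ∪ Y := by
  obtain ⟨b, hb, b', hb', hne⟩ := exists_pair_of_two_le h2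
  obtain ⟨v1, v2, v3, v4, hsq, hsub, -, -⟩ :=
    h.2.2 {b} (Y \ {b}) ⟨b, rfl⟩ ⟨b', hb', by simp [hne.symm]⟩ (singleton_union_diff hb)
      (by simp [Set.disjoint_left])
  exact ⟨v1, v2, v3, v4, hsq, hsub⟩

lemma SquareConnected.two_le (h : G.SquareConnected A B) :
    2 ≤ A.ncard ∧ 2 ≤ B.ncard := by
  have hp := h.1
  obtain ⟨hAne, hBne, hd, hAcl, hBcl, hns, -⟩ := hp
  have key : ∀ (X Y : Set V), G.SquareConnected X Y → 2 ≤ Y.ncard → 2 ≤ X.ncard := by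
    intro X Y hsc h2
    obtain ⟨v1, v2, v3, v4, hsq, hsub⟩ := sc_square_of_two hsc h2
    obtain ⟨⟨x, hx, y, hy, hxy, -, -⟩, -⟩ :=
      square_two_in_each hsc.1.2.2.2.1 hsc.1.2.2.2.2.1 hsc.1.2.2.1 hsq hsub
    exact two_le_ncard_of_pair hx hy hxy
  by_cases hA1 : ∃ a, A = {a}
  · have hB2 : 2 ≤ B.ncard := by
      refine nonsingleton_two_le hBne fun hB1 => ?_
      obtain ⟨a, ha⟩ := hA1; obtain ⟨b, hb⟩ := hB1
      exact hns ⟨a, b, ha, hb⟩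
    exact ⟨key A B h hB2, hB2⟩
  · have hA2 : 2 ≤ A.ncard := nonsingleton_two_le hAne hA1
    exact ⟨hA2, key B A h.swap hA2⟩

/-- Every vertex of `A` has both an antiadjacent and an adjacent partner in `B`. -/
lemma SquareConnected.mixed (h : G.SquareConnected A B) {a : V} (ha : a ∈ A) :
    (∃ b ∈ B, G.AntiAdj a b) ∧ (∃ b ∈ B, G.Adj a b) := by
  have hA2 := h.two_le.1
  obtain ⟨a', ha', hne⟩ := Set.exists_ne_of_one_lt_ncard (show 1 < A.ncard by omega) a
  obtain ⟨v1, v2, v3, v4, hsq, hsub, hm1, hm2⟩ :=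
    h.2.1 {a} (A \ {a}) ⟨a, rfl⟩ ⟨a', ha', by simp [hne]⟩ (singleton_union_diff ha)
      (by simp [Set.disjoint_left])
  obtain ⟨z, hz, hz'⟩ := hm1
  obtain ⟨w, hw, hw'⟩ := hm2
  simp only [Set.mem_singleton_iff] at hz'
  subst hz'
  obtain ⟨b, b', hbB, hb'B, hsq'⟩ := square_normalize h.1.2.2.2.1 h.1.2.2.2.2.1
    h.1.2.2.1 hsq hsub hz hw ha hw'.1 (fun hh => hw'.2 (hh ▸ rfl))
  exact ⟨⟨b, hbB, hsq'.1⟩, ⟨b', hb'B, hsq'.2.2.2.2.2.symm⟩⟩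

/-- Any square-connected pair extends to an inclusion-maximal one. -/
lemma SquareConnected.exists_max {X Y : Set V} (h : G.SquareConnected X Y) :
    ∃ M1 M2, G.MaxSquareConnected M1 M2 ∧ X ⊆ M1 ∧ Y ⊆ M2 := by
  classical
  set S : Set (Set V × Set V) := {p | G.SquareConnected p.1 p.2 ∧ X ⊆ p.1 ∧ Y ⊆ p.2}
    with hS
  have hfin : S.Finite := Set.toFinite S
  have hne : S.Nonempty := ⟨(X, Y), h, subset_rfl, subset_rfl⟩
  obtain ⟨m, hm, hmax'⟩ :=
    Set.Finite.exists_maximalFor (fun p => p.1.ncard + p.2.ncard) S hfin hne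
  refine ⟨m.1, m.2, ⟨hm.1, ?_⟩, hm.2.1, hm.2.2⟩
  intro A' B' hsc hsub1 hsub2
  have hmem : (A', B') ∈ S := ⟨hsc, hm.2.1.trans hsub1, hm.2.2.trans hsub2⟩
  have hle1 : m.1.ncard ≤ A'.ncard := Set.ncard_le_ncard hsub1 A'.toFinite
  have hle2 : m.2.ncard ≤ B'.ncard := Set.ncard_le_ncard hsub2 B'.toFinite
  have heq := hmax' hmem (Nat.add_le_add hle1 hle2)
  simp only at heq
  exact ⟨(Set.eq_of_subset_of_ncard_le hsub1 (by omega) A'.toFinite).symm,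
    (Set.eq_of_subset_of_ncard_le hsub2 (by omega) B'.toFinite).symm⟩

end SCMore

end Trigraph

namespace Trigraph

variable {V V' W : Type}

section SquareLift

variable {G : Trigraph V} {H : Trigraph W} {J : W → Set V}

lemma theta_zero_comm {H : Trigraph W} {u v : W} (h : H.θ u v = 0) : H.θ v u = 0 := by
  rw [H.symm]; exact h

lemma matching_ne {H : Trigraph W} {u v w : W} (h : H.θ u v = 0) (huv : u ≠ v)
    (huw : u ≠ w) (hvw : v ≠ w) : H.θ u w ≠ 0 :=
  H.semi_matching u v w huv huw hvw h

/-- A square in an antithickening lifts to a square in the original trigraph. -/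
lemma IsThickening.square_lift (hth : G.IsThickening H J) {x1 x2 x3 x4 : W}
    (hsq : H.IsSquare x1 x2 x3 x4) :
    ∃ w1 ∈ J x1, ∃ w2 ∈ J x2, ∃ w3 ∈ J x3, ∃ w4 ∈ J x4, G.IsSquare w1 w2 w3 w4 := by
  obtain ⟨an13, an24, ad12, ad23, ad34, ad41⟩ := hsq
  have n13 : x1 ≠ x3 := an13.ne
  have n24 : x2 ≠ x4 := an24.ne
  have n12 : x1 ≠ x2 := ad12.ne
  have n23 : x2 ≠ x3 := ad23.ne
  have n34 : x3 ≠ x4 := ad34.ne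
  have n41 : x4 ≠ x1 := ad41.ne
  have hsq' : H.IsSquare x1 x2 x3 x4 := ⟨an13, an24, ad12, ad23, ad34, ad41⟩
  obtain ⟨d1, hd1⟩ := (hth.1 x1).1
  obtain ⟨d2, hd2⟩ := (hth.1 x2).1
  obtain ⟨d3, hd3⟩ := (hth.1 x3).1
  obtain ⟨d4, hd4⟩ := (hth.1 x4).1
  by_cases h13 : H.θ x1 x3 = 0
  · -- all four sides are strong
    have s12 : H.θ x1 x2 ≠ 0 := matching_ne h13 n13 n12 n23.symm
    have s14 : H.θ x1 x4 ≠ 0 := matching_ne h13 n13 n41.symm n34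
    have s32 : H.θ x3 x2 ≠ 0 := matching_ne (theta_zero_comm h13) n13.symm n23.symm n12
    have s34 : H.θ x3 x4 ≠ 0 := matching_ne (theta_zero_comm h13) n13.symm n34 n41.symm
    have s23 : H.θ x2 x3 ≠ 0 := fun h => s32 (theta_zero_comm h)
    have s41 : H.θ x4 x1 ≠ 0 := fun h => s14 (theta_zero_comm h)
    obtain ⟨w1, hw1, w3, hw3, a13⟩ := hth.semi_wit_anti ⟨n13, h13⟩
    by_cases h24 : H.θ x2 x4 = 0
    · obtain ⟨w2, hw2, w4, hw4, a24⟩ := hth.semi_wit_anti ⟨n24, h24⟩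
      exact ⟨w1, hw1, w2, hw2, w3, hw3, w4, hw4, a13, a24,
        hth.adj_up ad12 s12 hw1 hw2, hth.adj_up ad23 s23 hw2 hw3,
        hth.adj_up ad34 s34 hw3 hw4, hth.adj_up ad41 s41 hw4 hw1⟩
    · exact ⟨w1, hw1, d2, hd2, w3, hw3, d4, hd4, a13,
        hth.anti_up an24 h24 hd2 hd4,
        hth.adj_up ad12 s12 hw1 hd2, hth.adj_up ad23 s23 hd2 hw3,
        hth.adj_up ad34 s34 hw3 hd4, hth.adj_up ad41 s41 hd4 hw1⟩
  · by_cases h24 : H.θ x2 x4 = 0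
    · have s21 : H.θ x2 x1 ≠ 0 := matching_ne h24 n24 n12.symm n41
      have s23 : H.θ x2 x3 ≠ 0 := matching_ne h24 n24 n23 n34.symm
      have s41 : H.θ x4 x1 ≠ 0 := matching_ne (theta_zero_comm h24) n24.symm n41 n12.symm
      have s43 : H.θ x4 x3 ≠ 0 := matching_ne (theta_zero_comm h24) n24.symm n34.symm n23
      have s12 : H.θ x1 x2 ≠ 0 := fun h => s21 (theta_zero_comm h)
      have s34 : H.θ x3 x4 ≠ 0 := fun h => s43 (theta_zero_comm h)
      obtain ⟨w2, hw2, w4, hw4, a24⟩ := hth.semi_wit_anti ⟨n24, h24⟩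
      exact ⟨d1, hd1, w2, hw2, d3, hd3, w4, hw4,
        hth.anti_up an13 h13 hd1 hd3, a24,
        hth.adj_up ad12 s12 hd1 hw2, hth.adj_up ad23 s23 hw2 hd3,
        hth.adj_up ad34 s34 hd3 hw4, hth.adj_up ad41 s41 hw4 hd1⟩
    · -- both diagonals strong; at most two opposite sides are semi
      by_cases h12 : H.θ x1 x2 = 0
      · have s23 : H.θ x2 x3 ≠ 0 :=
          matching_ne (theta_zero_comm h12) n12.symm n23 n13
        have s41 : H.θ x4 x1 ≠ 0 := fun h =>
          matching_ne h12 n12 n41.symm n24 (theta_zero_comm h)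
        obtain ⟨w1, hw1, w2, hw2, j12⟩ := hth.semi_wit_adj ⟨n12, h12⟩
        by_cases h34 : H.θ x3 x4 = 0
        · obtain ⟨w3, hw3, w4, hw4, j34⟩ := hth.semi_wit_adj ⟨n34, h34⟩
          exact ⟨w1, hw1, w2, hw2, w3, hw3, w4, hw4,
            hth.anti_up an13 h13 hw1 hw3, hth.anti_up an24 h24 hw2 hw4,
            j12, hth.adj_up ad23 s23 hw2 hw3, j34, hth.adj_up ad41 s41 hw4 hw1⟩
        · exact ⟨w1, hw1, w2, hw2, d3, hd3, d4, hd4,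
            hth.anti_up an13 h13 hw1 hd3, hth.anti_up an24 h24 hw2 hd4,
            j12, hth.adj_up ad23 s23 hw2 hd3, hth.adj_up ad34 h34 hd3 hd4,
            hth.adj_up ad41 s41 hd4 hw1⟩
      · by_cases h23 : H.θ x2 x3 = 0
        · have s34 : H.θ x3 x4 ≠ 0 :=
            matching_ne (theta_zero_comm h23) n23.symm n34 n24
          obtain ⟨w2, hw2, w3, hw3, j23⟩ := hth.semi_wit_adj ⟨n23, h23⟩
          by_cases h41 : H.θ x4 x1 = 0
          · obtain ⟨w4, hw4, w1, hw1, j41⟩ := hth.semi_wit_adj ⟨n41, h41⟩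
            exact ⟨w1, hw1, w2, hw2, w3, hw3, w4, hw4,
              hth.anti_up an13 h13 hw1 hw3, hth.anti_up an24 h24 hw2 hw4,
              hth.adj_up ad12 h12 hw1 hw2, j23,
              hth.adj_up ad34 s34 hw3 hw4, j41⟩
          · exact ⟨d1, hd1, w2, hw2, w3, hw3, d4, hd4,
              hth.anti_up an13 h13 hd1 hw3, hth.anti_up an24 h24 hw2 hd4,
              hth.adj_up ad12 h12 hd1 hw2, j23,
              hth.adj_up ad34 s34 hw3 hd4, hth.adj_up ad41 h41 hd4 hd1⟩
        · by_cases h34 : H.θ x3 x4 = 0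
          · have s41 : H.θ x4 x1 ≠ 0 :=
              matching_ne (theta_zero_comm h34) n34.symm n41 n13.symm
            obtain ⟨w3, hw3, w4, hw4, j34⟩ := hth.semi_wit_adj ⟨n34, h34⟩
            exact ⟨d1, hd1, d2, hd2, w3, hw3, w4, hw4,
              hth.anti_up an13 h13 hd1 hw3, hth.anti_up an24 h24 hd2 hw4,
              hth.adj_up ad12 h12 hd1 hd2, hth.adj_up ad23 h23 hd2 hw3,
              j34, hth.adj_up ad41 s41 hw4 hd1⟩
          · by_cases h41 : H.θ x4 x1 = 0
            · obtain ⟨w4, hw4, w1, hw1, j41⟩ := hth.semi_wit_adj ⟨n41, h41⟩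
              exact ⟨w1, hw1, d2, hd2, d3, hd3, w4, hw4,
                hth.anti_up an13 h13 hw1 hd3, hth.anti_up an24 h24 hd2 hw4,
                hth.adj_up ad12 h12 hw1 hd2, hth.adj_up ad23 h23 hd2 hd3,
                hth.adj_up ad34 h34 hd3 hw4, j41⟩
            · exact ⟨d1, hd1, d2, hd2, d3, hd3, d4, hd4,
                hth.anti_up an13 h13 hd1 hd3, hth.anti_up an24 h24 hd2 hd4,
                hth.adj_up ad12 h12 hd1 hd2, hth.adj_up ad23 h23 hd2 hd3,
                hth.adj_up ad34 h34 hd3 hd4, hth.adj_up ad41 h41 hd4 hd1⟩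

end SquareLift

end Trigraph

namespace Trigraph

variable {V V' W : Type}

section LiftSC

variable [Finite V] {G : Trigraph V} {G' : Trigraph V'} {I : V' → Set V}

/-- The union of the classes over a set of vertices of the antithickening. -/
private def blow (I : V' → Set V) (S : Set V') : Set V := ⋃ x ∈ S, I x

private lemma mem_blow {S : Set V'} {x : V'} {v : V} (hx : x ∈ S) (hv : v ∈ I x) :
    v ∈ blow I S := Set.mem_biUnion hx hv

private lemma blow_elim {S : Set V'} {v : V} (h : v ∈ blow I S) :
    ∃ x ∈ S, v ∈ I x := by simpa [blow] using h

lemma lift_hposc (hth : G.IsThickening G' I) {A' B' : Set V'}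
    (hp : G'.HPOSC A' B') : G.HPOSC (blow I A') (blow I B') := by
  obtain ⟨hA'ne, hB'ne, hdisj, hclA, hclB, hnsing, hhomog⟩ := hp
  refine ⟨?_, ?_, ?_, ?_, ?_, ?_, ?_⟩
  · obtain ⟨x, hx⟩ := hA'ne
    obtain ⟨v, hv⟩ := (hth.1 x).1
    exact ⟨v, mem_blow hx hv⟩
  · obtain ⟨x, hx⟩ := hB'ne
    obtain ⟨v, hv⟩ := (hth.1 x).1
    exact ⟨v, mem_blow hx hv⟩
  · rw [Set.disjoint_left]
    intro v hv hv'
    obtain ⟨x, hx, hvx⟩ := blow_elim hv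
    obtain ⟨y, hy, hvy⟩ := blow_elim hv'
    have : x = y := hth.class_eq hvx hvy
    exact disj_absurd hdisj hx (this ▸ hy)
  · intro v hv w hw hne
    obtain ⟨x, hx, hvx⟩ := blow_elim hv
    obtain ⟨y, hy, hvy⟩ := blow_elim hw
    by_cases hxy : x = y
    · exact hth.clique_pair hvx (hxy ▸ hvy) hne
    · exact hth.strongly_complete hxy (hclA hx hy hxy) v hvx w hvy
  · intro v hv w hw hne
    obtain ⟨x, hx, hvx⟩ := blow_elim hv
    obtain ⟨y, hy, hvy⟩ := blow_elim hw
    by_cases hxy : x = y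
    · exact hth.clique_pair hvx (hxy ▸ hvy) hne
    · exact hth.strongly_complete hxy (hclB hx hy hxy) v hvx w hvy
  · rintro ⟨a, b, hAa, hBb⟩
    obtain ⟨x0, hx0⟩ := hA'ne
    obtain ⟨y0, hy0⟩ := hB'ne
    refine hnsing ⟨x0, y0, ?_, ?_⟩
    · apply Set.eq_singleton_iff_unique_mem.2
      refine ⟨hx0, fun x hx => ?_⟩
      obtain ⟨v, hv⟩ := (hth.1 x).1
      obtain ⟨v0, hv0⟩ := (hth.1 x0).1
      have h1 : v = a := by
        have := mem_blow hx hv; rw [hAa] at this; exact this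
      have h2 : v0 = a := by
        have := mem_blow hx0 hv0; rw [hAa] at this; exact this
      exact hth.class_eq hv (by rw [h1, ← h2]; exact hv0)
    · apply Set.eq_singleton_iff_unique_mem.2
      refine ⟨hy0, fun y hy => ?_⟩
      obtain ⟨v, hv⟩ := (hth.1 y).1
      obtain ⟨v0, hv0⟩ := (hth.1 y0).1
      have h1 : v = b := by
        have := mem_blow hy hv; rw [hBb] at this; exact this
      have h2 : v0 = b := by
        have := mem_blow hy0 hv0; rw [hBb] at this; exact this
      exact hth.class_eq hv (by rw [h1, ← h2]; exact hv0)
  · intro v hv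
    obtain ⟨w, hw⟩ := hth.exists_class v
    have hwAB : w ∉ A' ∪ B' := by
      rintro (h | h)
      · exact hv (Or.inl (mem_blow h hw))
      · exact hv (Or.inr (mem_blow h hw))
    have hh := hhomog w hwAB
    constructor
    · rcases hh.1 with h | h
      · left
        rintro u hu y hy
        obtain ⟨x, hx, hyx⟩ := blow_elim hy
        have hne : w ≠ x := fun hh' => hwAB (Or.inl (hh' ▸ hx))
        simp only [Set.mem_singleton_iff] at hu
        subst hu
        exact hth.strongly_complete hne (h w rfl x hx) _ hw y hyx
      · right
        rintro u hu y hy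
        obtain ⟨x, hx, hyx⟩ := blow_elim hy
        have hne : w ≠ x := fun hh' => hwAB (Or.inl (hh' ▸ hx))
        simp only [Set.mem_singleton_iff] at hu
        subst hu
        exact hth.strongly_anticomplete hne (h w rfl x hx) _ hw y hyx
    · rcases hh.2 with h | h
      · left
        rintro u hu y hy
        obtain ⟨x, hx, hyx⟩ := blow_elim hy
        have hne : w ≠ x := fun hh' => hwAB (Or.inr (hh' ▸ hx))
        simp only [Set.mem_singleton_iff] at hu
        subst hu
        exact hth.strongly_complete hne (h w rfl x hx) _ hw y hyx
      · right
        rintro u hu y hy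
        obtain ⟨x, hx, hyx⟩ := blow_elim hy
        have hne : w ≠ x := fun hh' => hwAB (Or.inr (hh' ▸ hx))
        simp only [Set.mem_singleton_iff] at hu
        subst hu
        exact hth.strongly_anticomplete hne (h w rfl x hx) _ hw y hyx

lemma lift_meets (hth : G.IsThickening G' I)
    (hbig : ∀ v : V', 2 ≤ (I v).ncard →
      ∃ A B : Set V, G.MaxSquareConnected A B ∧ (I v = A ∨ I v = B))
    (hmax : ∀ A B : Set V, G.MaxSquareConnected A B →
      ∃ a b : V', G'.SemiAdj a b ∧ I a = A ∧ I b = B)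
    {A' B' : Set V'} (hsc : G'.SquareConnected A' B') {U U' : Set V}
    (hU : U.Nonempty) (hU' : U'.Nonempty) (hun : U ∪ U' = blow I A')
    (hd : Disjoint U U') : G.SquareMeets (blow I A' ∪ blow I B') U U' := by
  classical
  by_cases hsplit : ∃ x ∈ A', (I x ∩ U).Nonempty ∧ (I x ∩ U').Nonempty
  · obtain ⟨x, hxA', ⟨u, hu⟩, ⟨u', hu'⟩⟩ := hsplit
    have hbig2 : 2 ≤ (I x).ncard :=
      two_le_ncard_of_pair hu.1 hu'.1 (fun h => disj_absurd hd hu.2 (h ▸ hu'.2))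
    obtain ⟨Am, Bm, hmaxAB, hxor⟩ := hbig x hbig2
    obtain ⟨a, b, hsemi, hIa, hIb⟩ := hmax Am Bm hmaxAB
    have hIxsub : I x ⊆ U ∪ U' := by
      rw [hun]; exact fun v hv => mem_blow hxA' hv
    have hunx : (I x ∩ U) ∪ (I x ∩ U') = I x := by
      rw [← Set.inter_union_distrib_left, Set.inter_eq_left.2 hIxsub]
    have hdx : Disjoint (I x ∩ U) (I x ∩ U') :=
      hd.mono Set.inter_subset_right Set.inter_subset_right
    rcases hxor with hxe | hxe
    · -- I x = Am, so x = a and b ∈ B'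
      have hxa : x = a := hth.class_eq hu.1 (by rw [hxe, ← hIa] at hu; exact hu.1)
      have hbB' : b ∈ B' := by
        have hsemi' : G'.SemiAdj x b := hxa ▸ hsemi
        by_contra hbB'
        have hbA' : b ∉ A' := by
          intro hbA
          exact absurd (clique_theta hsc.1.2.2.2.1 hxA' hbA hsemi'.ne) (by rw [hsemi'.2]; omega)
        have := hsc.1.2.2.2.2.2.2 b (by simp [hbA', hbB'])
        rcases this.1 with h | h
        · have := h b rfl x hxA'
          rw [StrongAdj, G'.symm] at this
          rw [hsemi'.2] at this; omega
        · have := h b rfl x hxA'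
          rw [StrongAntiAdj, G'.symm] at this
          rw [hsemi'.2] at this; omega
      obtain ⟨v1, v2, v3, v4, hsq, hsub, hm1, hm2⟩ :=
        hmaxAB.1.2.1 (I x ∩ U) (I x ∩ U') ⟨u, hu⟩ ⟨u', hu'⟩ (by rw [hunx, hxe]) hdx
      refine ⟨v1, v2, v3, v4, hsq, ?_, hm1.mono (Set.inter_subset_inter_right _ Set.inter_subset_right),
        hm2.mono (Set.inter_subset_inter_right _ Set.inter_subset_right)⟩
      refine hsub.trans ?_
      rw [← hxe, ← hIb]
      exact Set.union_subset_union (fun v hv => mem_blow hxA' hv)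
        (fun v hv => mem_blow hbB' hv)
    · -- I x = Bm, so x = b and a ∈ B'
      have hxb : x = b := hth.class_eq hu.1 (by rw [hxe, ← hIb] at hu; exact hu.1)
      have haB' : a ∈ B' := by
        have hsemi' : G'.SemiAdj x a := hxb ▸ hsemi.symm
        by_contra haB'
        have haA' : a ∉ A' := by
          intro haA
          exact absurd (clique_theta hsc.1.2.2.2.1 hxA' haA hsemi'.ne) (by rw [hsemi'.2]; omega)
        have := hsc.1.2.2.2.2.2.2 a (by simp [haA', haB'])
        rcases this.1 with h | h
        · have := h a rfl x hxA'
          rw [StrongAdj, G'.symm] at this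
          rw [hsemi'.2] at this; omega
        · have := h a rfl x hxA'
          rw [StrongAntiAdj, G'.symm] at this
          rw [hsemi'.2] at this; omega
      obtain ⟨v1, v2, v3, v4, hsq, hsub, hm1, hm2⟩ :=
        hmaxAB.1.2.2 (I x ∩ U) (I x ∩ U') ⟨u, hu⟩ ⟨u', hu'⟩ (by rw [hunx, hxe]) hdx
      refine ⟨v1, v2, v3, v4, hsq, ?_, hm1.mono (Set.inter_subset_inter_right _ Set.inter_subset_right),
        hm2.mono (Set.inter_subset_inter_right _ Set.inter_subset_right)⟩
      refine hsub.trans ?_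
      rw [← hxe, ← hIa]
      intro v hv
      rcases hv with hv | hv
      · exact Or.inr (mem_blow haB' hv)
      · exact Or.inl (mem_blow hxA' hv)
  · push_neg at hsplit
    have htotal : ∀ x ∈ A', I x ⊆ U ∨ I x ⊆ U' := by
      intro x hx
      by_cases hIU : (I x ∩ U).Nonempty
      · left
        intro v hv
        have hv2 : v ∈ U ∪ U' := by rw [hun]; exact mem_blow hx hv
        rcases hv2 with h | h
        · exact h
        · have hemp := hsplit x hx hIU
          exact absurd (hemp ▸ (show v ∈ I x ∩ U' from ⟨hv, h⟩)) (Set.notMem_empty v)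
      · right
        intro v hv
        have hv2 : v ∈ U ∪ U' := by rw [hun]; exact mem_blow hx hv
        rcases hv2 with h | h
        · exact absurd ⟨v, hv, h⟩ hIU
        · exact h
    set P : Set V' := {x ∈ A' | (I x ∩ U).Nonempty} with hP
    set P' : Set V' := {x ∈ A' | (I x ∩ U').Nonempty} with hP'
    have hPne : P.Nonempty := by
      obtain ⟨v, hv⟩ := hU
      obtain ⟨x, hx, hvx⟩ := blow_elim (hun ▸ Or.inl hv : v ∈ blow I A')
      exact ⟨x, hx, v, hvx, hv⟩
    have hP'ne : P'.Nonempty := by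
      obtain ⟨v, hv⟩ := hU'
      obtain ⟨x, hx, hvx⟩ := blow_elim (hun ▸ Or.inr hv : v ∈ blow I A')
      exact ⟨x, hx, v, hvx, hv⟩
    have hPun : P ∪ P' = A' := by
      apply Set.Subset.antisymm
      · rintro x (hx | hx)
        · exact hx.1
        · exact hx.1
      · intro x hx
        obtain ⟨v, hv⟩ := (hth.1 x).1
        have hv2 : v ∈ U ∪ U' := by rw [hun]; exact mem_blow hx hv
        rcases hv2 with h | h
        · exact Or.inl ⟨hx, v, hv, h⟩
        · exact Or.inr ⟨hx, v, hv, h⟩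
    have hPd : Disjoint P P' := by
      rw [Set.disjoint_left]
      rintro x ⟨hx, hxU⟩ ⟨-, hxU'⟩
      exact absurd (hsplit x hx hxU) hxU'.ne_empty
    obtain ⟨x1, x2, x3, x4, hsq', hsub', hm1, hm2⟩ := hsc.2.1 P P' hPne hP'ne hPun hPd
    obtain ⟨w1, hw1, w2, hw2, w3, hw3, w4, hw4, hsqG⟩ := hth.square_lift hsq'
    have hsubG : ({w1, w2, w3, w4} : Set V) ⊆ blow I A' ∪ blow I B' := by
      have hmem : ∀ (x : V') (wv : V), wv ∈ I x → x ∈ A' ∪ B' →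
          wv ∈ blow I A' ∪ blow I B' := by
        rintro x wv hwv (hx | hx)
        · exact Or.inl (mem_blow hx hwv)
        · exact Or.inr (mem_blow hx hwv)
      rintro y (rfl | rfl | rfl | rfl)
      · exact hmem x1 y hw1 (hsub' (by simp))
      · exact hmem x2 y hw2 (hsub' (by simp))
      · exact hmem x3 y hw3 (hsub' (by simp))
      · exact hmem x4 y hw4 (hsub' (by simp))
    have hrep : ∀ (S : Set V') (z : V'), z ∈ S → z ∈ ({x1, x2, x3, x4} : Set V') →
        (∀ x ∈ S, I x ⊆ U ∨ I x ⊆ U') → (∀ x ∈ S, (I x ∩ U').Nonempty → False) →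
        False → True := fun _ _ _ _ _ _ _ => trivial
    -- extract a lifted representative lying in U
    have hinU : (({w1, w2, w3, w4} : Set V) ∩ U).Nonempty := by
      obtain ⟨z, hz, hzP⟩ := hm1
      have hzU : I z ⊆ U := by
        rcases htotal z hzP.1 with h | h
        · exact h
        · obtain ⟨v, hv, hvU⟩ := hzP.2
          exact absurd hvU fun hh => disj_absurd hd hh (h hv)
      simp only [Set.mem_insert_iff, Set.mem_singleton_iff] at hz
      rcases hz with rfl | rfl | rfl | rfl
      · exact ⟨w1, by simp, hzU hw1⟩
      · exact ⟨w2, by simp, hzU hw2⟩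
      · exact ⟨w3, by simp, hzU hw3⟩
      · exact ⟨w4, by simp, hzU hw4⟩
    have hinU' : (({w1, w2, w3, w4} : Set V) ∩ U').Nonempty := by
      obtain ⟨z, hz, hzP⟩ := hm2
      have hzU : I z ⊆ U' := by
        rcases htotal z hzP.1 with h | h
        · obtain ⟨v, hv, hvU⟩ := hzP.2
          exact absurd hvU fun hh => disj_absurd hd (h hv) hh
        · exact h
      simp only [Set.mem_insert_iff, Set.mem_singleton_iff] at hz
      rcases hz with rfl | rfl | rfl | rfl
      · exact ⟨w1, by simp, hzU hw1⟩
      · exact ⟨w2, by simp, hzU hw2⟩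
      · exact ⟨w3, by simp, hzU hw3⟩
      · exact ⟨w4, by simp, hzU hw4⟩
    exact ⟨w1, w2, w3, w4, hsqG, hsubG, hinU, hinU'⟩

lemma lift_sc (hth : G.IsThickening G' I)
    (hbig : ∀ v : V', 2 ≤ (I v).ncard →
      ∃ A B : Set V, G.MaxSquareConnected A B ∧ (I v = A ∨ I v = B))
    (hmax : ∀ A B : Set V, G.MaxSquareConnected A B →
      ∃ a b : V', G'.SemiAdj a b ∧ I a = A ∧ I b = B)
    {A' B' : Set V'} (hsc : G'.SquareConnected A' B') :
    G.SquareConnected (blow I A') (blow I B') := by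
  refine ⟨lift_hposc hth hsc.1, ?_, ?_⟩
  · intro U U' hU hU' hun hd
    exact lift_meets hth hbig hmax hsc hU hU' hun hd
  · intro U U' hU hU' hun hd
    have := lift_meets hth hbig hmax hsc.swap hU hU' hun hd
    rwa [Set.union_comm] at this

/-- The canonical antithickening is laminar. -/
lemma canonical_laminar (hth : G.IsThickening G' I)
    (hbig : ∀ v : V', 2 ≤ (I v).ncard →
      ∃ A B : Set V, G.MaxSquareConnected A B ∧ (I v = A ∨ I v = B))
    (hmax : ∀ A B : Set V, G.MaxSquareConnected A B →
      ∃ a b : V', G'.SemiAdj a b ∧ I a = A ∧ I b = B) : G'.Laminar := by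
  rintro ⟨A', B', hsc⟩
  obtain ⟨M1, M2, hmaxM, hsub1, hsub2⟩ := (lift_sc hth hbig hmax hsc).exists_max
  obtain ⟨a, b, hsemi, hIa, hIb⟩ := hmax M1 M2 hmaxM
  have hA' : ∀ x ∈ A', x = a := by
    intro x hx
    obtain ⟨v, hv⟩ := (hth.1 x).1
    have : v ∈ M1 := hsub1 (mem_blow hx hv)
    rw [← hIa] at this
    exact hth.class_eq hv this
  have hB' : ∀ y ∈ B', y = b := by
    intro y hy
    obtain ⟨v, hv⟩ := (hth.1 y).1
    have : v ∈ M2 := hsub2 (mem_blow hy hv)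
    rw [← hIb] at this
    exact hth.class_eq hv this
  obtain ⟨x0, hx0⟩ := hsc.1.1
  obtain ⟨y0, hy0⟩ := hsc.1.2.1
  refine hsc.1.2.2.2.2.2.1 ⟨a, b, ?_, ?_⟩
  · exact Set.eq_singleton_iff_unique_mem.2 ⟨hA' x0 hx0 ▸ hx0, hA'⟩
  · exact Set.eq_singleton_iff_unique_mem.2 ⟨hB' y0 hy0 ▸ hy0, hB'⟩

end LiftSC

end Trigraph

namespace Trigraph

variable {V V' W : Type}

section KeyNoCross

variable [Finite V] {G : Trigraph V} {H : Trigraph W} {J : W → Set V}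

/-- If a class contains an element of `B` and an element antiadjacent to some `b' ∈ B`,
then the class of `b'` is a semi-partner of the class. -/
lemma cross_semi (hth : G.IsThickening H J) {B : Set V} (hclB : G.IsStrongClique B)
    {w : W} {b : V} (hbJ : b ∈ J w) (hbB : b ∈ B)
    {a' b' : V} (ha'J : a' ∈ J w) (hb'B : b' ∈ B) (hanti : G.AntiAdj a' b')
    {u : W} (hb'u : b' ∈ J u) : H.θ w u = 0 ∧ w ≠ u := by
  have hb'w : b' ∉ J w := fun hmem =>
    (anti_iff.1 hanti).2 (hth.clique_pair ha'J hmem hanti.ne)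
  have hwu : w ≠ u := fun h => hb'w (h ▸ hb'u)
  have hbb' : b ≠ b' := fun h => hb'w (h ▸ hbJ)
  refine ⟨hth.theta_eq_zero hwu ha'J hb'u (anti_iff.1 hanti).2 hbJ hb'u ?_, hwu⟩
  rw [clique_theta hclB hbB hb'B hbb']; omega

/-- No class of an antithickening meets both parts of a square-connected pair `(A, B)`,
provided no square-connected pair of `G` crosses `(A, B)`. -/
lemma key_nocross (hth : G.IsThickening H J) {A B : Set V}
    (hsc : G.SquareConnected A B)
    (hnc : ∀ X Y : Set V, G.SquareConnected X Y →
      ¬((X ∩ A).Nonempty ∧ (X ∩ B).Nonempty)) :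
    ∀ w : W, ¬((J w ∩ A).Nonempty ∧ (J w ∩ B).Nonempty) := by
  rintro w ⟨⟨a, haJ, haA⟩, ⟨b, hbJ, hbB⟩⟩
  have hd : Disjoint A B := hsc.1.2.2.1
  have hclA : G.IsStrongClique A := hsc.1.2.2.2.1
  have hclB : G.IsStrongClique B := hsc.1.2.2.2.2.1
  have hhomog := hsc.1.2.2.2.2.2.2
  have hab : a ≠ b := fun h => disj_absurd hd haA (h ▸ hbB)
  obtain ⟨⟨bm, hbmB, hbmanti⟩, -⟩ := hsc.mixed haA
  obtain ⟨⟨am, hamA, hamanti⟩, -⟩ := hsc.swap.mixed hbB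
  obtain ⟨p, hbmp⟩ := hth.exists_class bm
  obtain ⟨p2, hamp2⟩ := hth.exists_class am
  have h1 := cross_semi hth hclB hbJ hbB haJ hbmB hbmanti hbmp
  have h2 := cross_semi hth hclA haJ haA hbJ hamA hamanti hamp2
  have hpp2 : p = p2 := by
    by_contra hne
    exact no_two_semi h1.2 h2.2 hne h1.1 h2.1
  have hamp : am ∈ J p := hpp2 ▸ hamp2
  have hwp : w ≠ p := h1.2
  have hsemi_wp : H.θ w p = 0 := h1.1
  have hsemi_pw : H.θ p w = 0 := theta_zero_comm hsemi_wp
  have Hw : ∀ x' ∈ J w, ∀ y' ∈ B, G.AntiAdj x' y' → y' ∈ J p := by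
    intro x' hx'J y' hy'B hanti
    obtain ⟨u, hu⟩ := hth.exists_class y'
    have hu0 := cross_semi hth hclB hbJ hbB hx'J hy'B hanti hu
    have hup : u = p := by
      by_contra hne
      exact no_two_semi hu0.2 hwp hne hu0.1 hsemi_wp
    exact hup ▸ hu
  have Hw' : ∀ y' ∈ J w, ∀ x' ∈ A, G.AntiAdj y' x' → x' ∈ J p := by
    intro y' hy'J x' hx'A hanti
    obtain ⟨u, hu⟩ := hth.exists_class x'
    have hu0 := cross_semi hth hclA haJ haA hy'J hx'A hanti hu
    have hup : u = p := by
      by_contra hne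
      exact no_two_semi hu0.2 hwp hne hu0.1 hsemi_wp
    exact hup ▸ hu
  have Hp : ∀ x' ∈ J p, ∀ y' ∈ B, G.AntiAdj x' y' → y' ∈ J w := by
    intro x' hx'J y' hy'B hanti
    obtain ⟨u, hu⟩ := hth.exists_class y'
    have hu0 := cross_semi hth hclB hbmp hbmB hx'J hy'B hanti hu
    have hup : u = w := by
      by_contra hne
      exact no_two_semi hu0.2 hwp.symm hne hu0.1 hsemi_pw
    exact hup ▸ hu
  have Hp' : ∀ y' ∈ J p, ∀ x' ∈ A, G.AntiAdj y' x' → x' ∈ J w := by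
    intro y' hy'J x' hx'A hanti
    obtain ⟨u, hu⟩ := hth.exists_class x'
    have hu0 := cross_semi hth hclA hamp hamA hy'J hx'A hanti hu
    have hup : u = w := by
      by_contra hne
      exact no_two_semi hu0.2 hwp.symm hne hu0.1 hsemi_pw
    exact hup ▸ hu
  set X : Set V := J w ∩ (A ∪ B) with hX
  set Y : Set V := J p ∩ (A ∪ B) with hY
  have hdisjwp : Disjoint (J w) (J p) := hth.2.1 w p hwp
  have hdXY : Disjoint X Y :=
    hdisjwp.mono Set.inter_subset_left Set.inter_subset_left
  have builder : ∀ (w1 w2 : W), w1 ≠ w2 →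
      (∀ x' ∈ J w1, ∀ y' ∈ B, G.AntiAdj x' y' → y' ∈ J w2) →
      (∀ y' ∈ J w1, ∀ x' ∈ A, G.AntiAdj y' x' → x' ∈ J w2) →
      ∀ a' ∈ J w1, a' ∈ A → ∀ b'' ∈ J w1, b'' ∈ B →
      ∃ q3 q4, G.IsSquare a' b'' q3 q4 ∧ q3 ∈ J w2 ∧ q3 ∈ B ∧ q4 ∈ J w2 ∧ q4 ∈ A := by
    intro w1 w2 hne12 H1 H1' a' ha'J ha'A b'' hb''J hb''B
    obtain ⟨⟨b', hb'B, hb'anti⟩, -⟩ := hsc.mixed ha'A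
    obtain ⟨⟨a'', ha''A, ha''anti⟩, -⟩ := hsc.swap.mixed hb''B
    have hb'J2 : b' ∈ J w2 := H1 a' ha'J b' hb'B hb'anti
    have ha''J2 : a'' ∈ J w2 := H1' b'' hb''J a'' ha''A ha''anti
    have hd12 : Disjoint (J w1) (J w2) := hth.2.1 w1 w2 hne12
    have hne1 : a' ≠ b'' := fun h => disj_absurd hd ha'A (h ▸ hb''B)
    have hne2 : b'' ≠ b' := hd12.ne_of_mem hb''J hb'J2
    have hne3 : b' ≠ a'' := fun h => disj_absurd hd (h ▸ ha''A) hb'B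
    have hne4 : a'' ≠ a' := (hd12.ne_of_mem ha'J ha''J2).symm
    refine ⟨b', a'', ⟨hb'anti, ha''anti, ?_, ?_, ?_, ?_⟩, hb'J2, hb'B, ha''J2, ha''A⟩
    · exact ⟨hne1, Or.inl (hth.clique_pair ha'J hb''J hne1)⟩
    · exact ⟨hne2, Or.inl (clique_theta hclB hb''B hb'B hne2)⟩
    · exact ⟨hne3, Or.inl (hth.clique_pair hb'J2 ha''J2 hne3)⟩
    · exact ⟨hne4, Or.inl (clique_theta hclA ha''A ha'A hne4)⟩
  have hposc : G.HPOSC X Y := by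
    refine ⟨⟨a, haJ, Or.inl haA⟩, ⟨am, hamp, Or.inl hamA⟩, hdXY, ?_, ?_, ?_, ?_⟩
    · intro x hx y hy hne
      exact hth.clique_pair hx.1 hy.1 hne
    · intro x hx y hy hne
      exact hth.clique_pair hx.1 hy.1 hne
    · rintro ⟨s, t, hXs, hYt⟩
      have haX : a ∈ X := ⟨haJ, Or.inl haA⟩
      have hbX : b ∈ X := ⟨hbJ, Or.inr hbB⟩
      rw [hXs, Set.mem_singleton_iff] at haX hbX
      exact hab (haX.trans hbX.symm)
    · intro v hv
      obtain ⟨q, hq⟩ := hth.exists_class v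
      by_cases hqw : q = w
      · subst hqw
        have hvAB : v ∉ A ∪ B := fun h => hv (Or.inl ⟨hq, h⟩)
        have hhv := hhomog v hvAB
        have hcA : G.StronglyComplete {v} A := by
          rcases hhv.1 with h | h
          · exact h
          · exfalso
            have h1' := h v rfl a haA
            have h2' := hth.clique_pair hq haJ (fun hh => hvAB (hh ▸ Or.inl haA))
            rw [StrongAntiAdj] at h1'
            omega
        have hcB : G.StronglyComplete {v} B := by
          rcases hhv.2 with h | h
          · exact h
          · exfalso
            have h1' := h v rfl b hbB
            have h2' := hth.clique_pair hq hbJ (fun hh => hvAB (hh ▸ Or.inr hbB))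
            rw [StrongAntiAdj] at h1'
            omega
        have hcAll : ∀ S : Set V, S ⊆ A ∪ B → G.StronglyComplete {v} S := by
          intro S hS u hu y hy
          simp only [Set.mem_singleton_iff] at hu
          subst hu
          rcases hS hy with h | h
          · exact hcA u rfl y h
          · exact hcB u rfl y h
        exact ⟨Or.inl (hcAll X (Set.inter_subset_right)),
          Or.inl (hcAll Y (Set.inter_subset_right))⟩
      · by_cases hqp : q = p
        · subst hqp
          have hvAB : v ∉ A ∪ B := fun h => hv (Or.inr ⟨hq, h⟩)
          have hhv := hhomog v hvAB
          have hcA : G.StronglyComplete {v} A := by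
            rcases hhv.1 with h | h
            · exact h
            · exfalso
              have h1' := h v rfl am hamA
              have h2' := hth.clique_pair hq hamp (fun hh => hvAB (hh ▸ Or.inl hamA))
              rw [StrongAntiAdj] at h1'
              omega
          have hcB : G.StronglyComplete {v} B := by
            rcases hhv.2 with h | h
            · exact h
            · exfalso
              have h1' := h v rfl bm hbmB
              have h2' := hth.clique_pair hq hbmp (fun hh => hvAB (hh ▸ Or.inr hbmB))
              rw [StrongAntiAdj] at h1'
              omega
          have hcAll : ∀ S : Set V, S ⊆ A ∪ B → G.StronglyComplete {v} S := by
            intro S hS u hu y hy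
            simp only [Set.mem_singleton_iff] at hu
            subst hu
            rcases hS hy with h | h
            · exact hcA u rfl y h
            · exact hcB u rfl y h
          exact ⟨Or.inl (hcAll X (Set.inter_subset_right)),
            Or.inl (hcAll Y (Set.inter_subset_right))⟩
        · have hpq2 : p ≠ q := fun h => hqp h.symm
          have hwq2 : w ≠ q := fun h => hqw h.symm
          have hqw' : H.θ q w ≠ 0 := by
            intro h0
            exact no_two_semi hwp hwq2 hpq2 hsemi_wp (theta_zero_comm h0)
          have hqp' : H.θ q p ≠ 0 := by
            intro h0
            exact no_two_semi hwp.symm hpq2 hwq2 hsemi_pw (theta_zero_comm h0)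
          constructor
          · rcases H.range_mem q w with h | h | h
            · exact Or.inl (fun u hu y hy => by
                simp only [Set.mem_singleton_iff] at hu
                subst hu
                exact hth.strongly_complete hqw h u hq y hy.1)
            · exact absurd h hqw'
            · exact Or.inr (fun u hu y hy => by
                simp only [Set.mem_singleton_iff] at hu
                subst hu
                exact hth.strongly_anticomplete hqw h u hq y hy.1)
          · rcases H.range_mem q p with h | h | h
            · exact Or.inl (fun u hu y hy => by
                simp only [Set.mem_singleton_iff] at hu
                subst hu
                exact hth.strongly_complete hqp h u hq y hy.1)
            · exact absurd h hqp'
            · exact Or.inr (fun u hu y hy => by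
                simp only [Set.mem_singleton_iff] at hu
                subst hu
                exact hth.strongly_anticomplete hqp h u hq y hy.1)
  have sideproof : ∀ (w1 w2 : W), w1 ≠ w2 →
      (∀ x' ∈ J w1, ∀ y' ∈ B, G.AntiAdj x' y' → y' ∈ J w2) →
      (∀ y' ∈ J w1, ∀ x' ∈ A, G.AntiAdj y' x' → x' ∈ J w2) →
      ∀ a0 ∈ J w1, a0 ∈ A → ∀ b0 ∈ J w1, b0 ∈ B →
      (J w1 ∩ (A ∪ B) ⊆ X ∪ Y) → (J w2 ∩ (A ∪ B) ⊆ X ∪ Y) →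
      ∀ U U' : Set V, U.Nonempty → U'.Nonempty → U ∪ U' = J w1 ∩ (A ∪ B) →
      Disjoint U U' → G.SquareMeets (X ∪ Y) U U' := by
    intro w1 w2 hne12 H1 H1' a0 ha0J ha0A b0 hb0J hb0B hc1 hc2 U U' hU hU' hun hdU
    suffices h : ∃ a' b'', a' ∈ J w1 ∧ a' ∈ A ∧ b'' ∈ J w1 ∧ b'' ∈ B ∧
        ((a' ∈ U ∧ b'' ∈ U') ∨ (a' ∈ U' ∧ b'' ∈ U)) by
      obtain ⟨a', b'', ha'J, ha'A, hb''J, hb''B, hcase⟩ := h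
      obtain ⟨q3, q4, hsq, hq3J, hq3B, hq4J, hq4A⟩ :=
        builder w1 w2 hne12 H1 H1' a' ha'J ha'A b'' hb''J hb''B
      refine ⟨a', b'', q3, q4, hsq, ?_, ?_, ?_⟩
      · rintro y (rfl | rfl | rfl | rfl)
        · exact hc1 ⟨ha'J, Or.inl ha'A⟩
        · exact hc1 ⟨hb''J, Or.inr hb''B⟩
        · exact hc2 ⟨hq3J, Or.inr hq3B⟩
        · exact hc2 ⟨hq4J, Or.inl hq4A⟩
      · rcases hcase with h' | h'
        · exact ⟨a', by simp, h'.1⟩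
        · exact ⟨b'', by simp, h'.2⟩
      · rcases hcase with h' | h'
        · exact ⟨b'', by simp, h'.2⟩
        · exact ⟨a', by simp, h'.1⟩
    by_cases hUA : ∃ a' ∈ U, a' ∈ A
    · obtain ⟨a', ha'U, ha'A⟩ := hUA
      have ha'm : a' ∈ J w1 ∩ (A ∪ B) := by rw [← hun]; exact Or.inl ha'U
      by_cases hU'B : ∃ b'' ∈ U', b'' ∈ B
      · obtain ⟨b'', hb''U', hb''B⟩ := hU'B
        have hb''m : b'' ∈ J w1 ∩ (A ∪ B) := by rw [← hun]; exact Or.inr hb''U'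
        exact ⟨a', b'', ha'm.1, ha'A, hb''m.1, hb''B, Or.inl ⟨ha'U, hb''U'⟩⟩
      · have hb0U : b0 ∈ U := by
          have hmm : b0 ∈ U ∪ U' := by rw [hun]; exact ⟨hb0J, Or.inr hb0B⟩
          rcases hmm with h | h
          · exact h
          · exact absurd ⟨b0, h, hb0B⟩ hU'B
        obtain ⟨a2, ha2U'⟩ := hU'
        have ha2m : a2 ∈ J w1 ∩ (A ∪ B) := by rw [← hun]; exact Or.inr ha2U'
        have ha2A : a2 ∈ A := by
          rcases ha2m.2 with h | h
          · exact h
          · exact absurd ⟨a2, ha2U', h⟩ hU'B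
        exact ⟨a2, b0, ha2m.1, ha2A, hb0J, hb0B, Or.inr ⟨ha2U', hb0U⟩⟩
    · obtain ⟨b1, hb1U⟩ := hU
      have hb1m : b1 ∈ J w1 ∩ (A ∪ B) := by rw [← hun]; exact Or.inl hb1U
      have hb1B : b1 ∈ B := by
        rcases hb1m.2 with h | h
        · exact absurd ⟨b1, hb1U, h⟩ hUA
        · exact h
      have ha0U' : a0 ∈ U' := by
        have hmm : a0 ∈ U ∪ U' := by rw [hun]; exact ⟨ha0J, Or.inl ha0A⟩
        rcases hmm with h | h
        · exact absurd ⟨a0, h, ha0A⟩ hUA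
        · exact h
      exact ⟨a0, b1, ha0J, ha0A, hb1m.1, hb1B, Or.inr ⟨ha0U', hb1U⟩⟩
  have hscXY : G.SquareConnected X Y := by
    refine ⟨hposc, ?_, ?_⟩
    · intro U U' h1 h2 h3 h4
      exact sideproof w p hwp Hw Hw' a haJ haA b hbJ hbB Set.subset_union_left
        Set.subset_union_right U U' h1 h2 h3 h4
    · intro U U' h1 h2 h3 h4
      exact sideproof p w hwp.symm Hp Hp' am hamp hamA bm hbmp hbmB
        Set.subset_union_right Set.subset_union_left U U' h1 h2 h3 h4
  exact hnc X Y hscXY ⟨⟨a, ⟨haJ, Or.inl haA⟩, haA⟩, ⟨b, ⟨hbJ, Or.inr hbB⟩, hbB⟩⟩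

end KeyNoCross

end Trigraph

namespace Trigraph

variable {V V' W : Type}

section KeyClaim

variable [Finite V] [Finite W] {G : Trigraph V} {H : Trigraph W} {J : W → Set V}

/-- KEY CLAIM: at most two classes of a laminar antithickening meet `A ∪ B` for a
square-connected pair `(A, B)` not crossed by any square-connected pair. -/
lemma key_claim (hth : G.IsThickening H J) (hlam : H.Laminar)
    {A B : Set V} (hsc : G.SquareConnected A B)
    (hnc : ∀ X Y : Set V, G.SquareConnected X Y →
      ¬((X ∩ A).Nonempty ∧ (X ∩ B).Nonempty)) :
    {w : W | (J w ∩ (A ∪ B)).Nonempty}.ncard ≤ 2 := by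
  have hNC := key_nocross hth hsc hnc
  have hncs : ∀ X Y : Set V, G.SquareConnected X Y →
      ¬((X ∩ B).Nonempty ∧ (X ∩ A).Nonempty) := fun X Y h hh => hnc X Y h ⟨hh.2, hh.1⟩
  have hNCs : ∀ w : W, ¬((J w ∩ B).Nonempty ∧ (J w ∩ A).Nonempty) :=
    fun w hh => hNC w ⟨hh.2, hh.1⟩
  have hC : {w : W | (J w ∩ (A ∪ B)).Nonempty} =
      {t : W | (J t ∩ A).Nonempty} ∪ {t : W | (J t ∩ B).Nonempty} := by
    ext t
    simp only [Set.mem_setOf_eq, Set.mem_union]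
    rw [Set.inter_union_distrib_left, Set.union_nonempty]
  rw [hC]
  -- if one side is covered by a single class, so is the other
  have sideSmall : ∀ (A B : Set V), G.SquareConnected A B →
      (∀ t : W, ¬((J t ∩ A).Nonempty ∧ (J t ∩ B).Nonempty)) →
      {t : W | (J t ∩ B).Nonempty}.ncard ≤ 1 →
      {t : W | (J t ∩ A).Nonempty}.ncard ≤ 1 := by
    intro A B hsc hNC hB1
    obtain ⟨b0, hb0⟩ := hsc.1.2.1
    obtain ⟨tB, htB⟩ := hth.exists_class b0
    have htBmem : tB ∈ {t : W | (J t ∩ B).Nonempty} := ⟨b0, htB, hb0⟩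
    have hBsub : B ⊆ J tB := by
      intro b hb
      obtain ⟨u, hu⟩ := hth.exists_class b
      have hmem : u ∈ {t : W | (J t ∩ B).Nonempty} := ⟨b, hu, hb⟩
      have hueq : u = tB := by
        by_contra hne
        exact absurd (two_le_ncard_of_pair hmem htBmem hne) (by omega)
      exact hueq ▸ hu
    have hsemi : ∀ t : W, (J t ∩ A).Nonempty → H.θ t tB = 0 ∧ t ≠ tB := by
      rintro t ⟨a0, ha0J, ha0A⟩
      have htne : t ≠ tB := by
        rintro rfl
        exact hNC t ⟨⟨a0, ha0J, ha0A⟩, ⟨b0, htB, hb0⟩⟩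
      obtain ⟨⟨bm, hbmB, hbmanti⟩, ⟨bp, hbpB, hbpadj⟩⟩ := hsc.mixed ha0A
      exact ⟨hth.theta_eq_zero htne ha0J (hBsub hbmB) (anti_iff.1 hbmanti).2 ha0J
        (hBsub hbpB) (adj_iff.1 hbpadj).2, htne⟩
    by_contra hc
    have h2 : 2 ≤ {t : W | (J t ∩ A).Nonempty}.ncard := by omega
    obtain ⟨t1, ht1, t2, ht2, hne⟩ := exists_pair_of_two_le h2
    have hs1 := hsemi t1 ht1
    have hs2 := hsemi t2 ht2
    exact no_two_semi hs1.2.symm hs2.2.symm hne (theta_zero_comm hs1.1)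
      (theta_zero_comm hs2.1)
  -- sticky classes have their semi-partner on the other side
  have sticky : ∀ (A B : Set V), G.SquareConnected A B →
      (∀ t : W, ¬((J t ∩ A).Nonempty ∧ (J t ∩ B).Nonempty)) →
      ∀ t : W, (J t ∩ A).Nonempty → ∀ x ∈ J t, x ∉ A ∪ B →
      ∃ u, (J u ∩ B).Nonempty ∧ H.θ t u = 0 ∧ t ≠ u := by
    intro A B hsc hNC t ht x hxJ hxAB
    obtain ⟨a0, ha0J, ha0A⟩ := ht
    have hhom := (hsc.1.2.2.2.2.2.2 x hxAB).2
    rcases hhom with hcomp | hanti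
    · obtain ⟨⟨bm, hbmB, hbmanti⟩, -⟩ := hsc.mixed ha0A
      obtain ⟨u, hu⟩ := hth.exists_class bm
      have htu : t ≠ u := by
        rintro rfl
        exact hNC t ⟨⟨a0, ha0J, ha0A⟩, ⟨bm, hu, hbmB⟩⟩
      refine ⟨u, ⟨bm, hu, hbmB⟩,
        hth.theta_eq_zero htu ha0J hu (anti_iff.1 hbmanti).2 hxJ hu ?_, htu⟩
      have := hcomp x rfl bm hbmB
      rw [StrongAdj] at this
      omega
    · obtain ⟨-, ⟨bp, hbpB, hbpadj⟩⟩ := hsc.mixed ha0A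
      obtain ⟨u, hu⟩ := hth.exists_class bp
      have htu : t ≠ u := by
        rintro rfl
        exact hNC t ⟨⟨a0, ha0J, ha0A⟩, ⟨bp, hu, hbpB⟩⟩
      refine ⟨u, ⟨bp, hu, hbpB⟩,
        hth.theta_eq_zero htu hxJ hu ?_ ha0J hu (adj_iff.1 hbpadj).2, htu⟩
      have := hanti x rfl bp hbpB
      rw [StrongAntiAdj] at this
      omega
  -- classes meeting one side form a strong clique in H
  have hclbar : ∀ (A B : Set V), G.SquareConnected A B →
      (∀ t : W, ¬((J t ∩ A).Nonempty ∧ (J t ∩ B).Nonempty)) →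
      ∀ t1 t2 : W, (J t1 ∩ A).Nonempty → (J t2 ∩ A).Nonempty → t1 ≠ t2 →
      H.θ t1 t2 = 1 := by
    intro A B hsc hNC t1 t2 ht1 ht2 hne
    obtain ⟨a1, ha1J, ha1A⟩ := ht1
    obtain ⟨a2, ha2J, ha2A⟩ := ht2
    have hclA := hsc.1.2.2.2.1
    have ha12 : a1 ≠ a2 := hth.mem_ne hne ha1J ha2J
    have hne1 : H.θ t1 t2 ≠ -1 :=
      hth.theta_ne_neg_one hne ha1J ha2J (by rw [clique_theta hclA ha1A ha2A ha12]; omega)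
    have hne0 : H.θ t1 t2 ≠ 0 := by
      intro h0
      obtain ⟨⟨x, hx, y, hy, hxy⟩, -⟩ := hth.semi_wits hne h0
      by_cases hxAB : x ∈ A ∪ B
      · rcases hxAB with hxA | hxB
        · by_cases hyAB : y ∈ A ∪ B
          · rcases hyAB with hyA | hyB
            · exact hxy (clique_theta hclA hxA hyA (hth.mem_ne hne hx hy))
            · exact hNC t2 ⟨⟨a2, ha2J, ha2A⟩, ⟨y, hy, hyB⟩⟩
          · obtain ⟨u, huB, hsem, htu⟩ := sticky A B hsc hNC t2 ⟨a2, ha2J, ha2A⟩ y hy hyAB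
            have hut1 : u ≠ t1 := by
              rintro rfl
              exact hNC u ⟨⟨a1, ha1J, ha1A⟩, huB⟩
            exact no_two_semi htu hne.symm hut1 hsem (theta_zero_comm h0)
        · exact hNC t1 ⟨⟨a1, ha1J, ha1A⟩, ⟨x, hx, hxB⟩⟩
      · obtain ⟨u, huB, hsem, htu⟩ := sticky A B hsc hNC t1 ⟨a1, ha1J, ha1A⟩ x hx hxAB
        have hut2 : u ≠ t2 := by
          rintro rfl
          exact hNC u ⟨⟨a2, ha2J, ha2A⟩, huB⟩
        exact no_two_semi htu hne hut2 hsem h0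
    rcases H.range_mem t1 t2 with h | h | h
    · exact h
    · exact absurd h hne0
    · exact absurd h hne1
  -- no semiedge from an outside class into the A-side when the A-side has ≥ 2 classes
  have hnosemi : ∀ (A B : Set V), G.SquareConnected A B →
      (∀ t : W, ¬((J t ∩ A).Nonempty ∧ (J t ∩ B).Nonempty)) →
      2 ≤ {t : W | (J t ∩ A).Nonempty}.ncard →
      ∀ u : W, J u ∩ (A ∪ B) = ∅ → ∀ t : W, (J t ∩ A).Nonempty → H.θ u t ≠ 0 := by
    intro A B hsc hNC hA2 u hu t ht h0
    have hmemJ : ∀ x ∈ J u, x ∉ A ∪ B := by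
      intro x hx hxAB
      have hxm : x ∈ J u ∩ (A ∪ B) := ⟨hx, hxAB⟩
      rw [hu] at hxm
      exact Set.notMem_empty x hxm
    have hut : u ≠ t := by
      rintro rfl
      obtain ⟨a0, ha0J, ha0A⟩ := ht
      exact hmemJ a0 ha0J (Or.inl ha0A)
    obtain ⟨⟨x, hx, y, hy, hxy1⟩, ⟨x', hx', y', hy', hxy2⟩⟩ := hth.semi_wits hut h0
    -- a sticky target class gives an immediate matching contradiction
    have hstickycase : ∀ z ∈ J t, z ∉ A ∪ B → False := by
      intro z hz hzAB
      obtain ⟨u', huB, hsem, htu'⟩ := sticky A B hsc hNC t ht z hz hzAB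
      have huu' : u ≠ u' := by
        rintro rfl
        obtain ⟨b', hb'J, hb'B⟩ := huB
        exact hmemJ b' hb'J (Or.inr hb'B)
      exact no_two_semi htu' hut.symm huu'.symm hsem (theta_zero_comm h0)
    have hyA : y ∈ A := by
      by_cases hyAB : y ∈ A ∪ B
      · rcases hyAB with h' | h'
        · exact h'
        · exact absurd ⟨ht, ⟨y, hy, h'⟩⟩ (hNC t)
      · exact absurd (hstickycase y hy hyAB) not_false
    have hy'A : y' ∈ A := by
      by_cases hyAB : y' ∈ A ∪ B
      · rcases hyAB with h' | h'
        · exact h'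
        · exact absurd ⟨ht, ⟨y', hy', h'⟩⟩ (hNC t)
      · exact absurd (hstickycase y' hy' hyAB) not_false
    -- x is strongly anticomplete to A, x' strongly complete to A
    have hxout := hmemJ x hx
    have hx'out := hmemJ x' hx'
    have hxanti : G.StronglyAnticomplete {x} A := by
      rcases (hsc.1.2.2.2.2.2.2 x hxout).1 with h' | h'
      · exact absurd (h' x rfl y hyA) hxy1
      · exact h'
    have hx'comp : G.StronglyComplete {x'} A := by
      rcases (hsc.1.2.2.2.2.2.2 x' hx'out).1 with h' | h'
      · exact h'
      · exact absurd (h' x' rfl y' hy'A) hxy2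
    -- a second class on the A-side
    obtain ⟨s1, hs1, s2, hs2, hs12⟩ := exists_pair_of_two_le hA2
    have hsecond : ∃ t'', t'' ≠ t ∧ (J t'' ∩ A).Nonempty := by
      by_cases h' : s1 = t
      · exact ⟨s2, fun hh => hs12 (h' ▸ hh ▸ rfl), hs2⟩
      · exact ⟨s1, h', hs1⟩
    obtain ⟨t'', ht''ne, a'', ha''J, ha''A⟩ := hsecond
    have hut'' : u ≠ t'' := by
      rintro rfl
      exact hmemJ a'' ha''J (Or.inl ha''A)
    have h0'' : H.θ u t'' = 0 := by
      refine hth.theta_eq_zero hut'' hx ha''J ?_ hx' ha''J ?_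
      · have := hxanti x rfl a'' ha''A
        rw [StrongAntiAdj] at this
        omega
      · have := hx'comp x' rfl a'' ha''A
        rw [StrongAdj] at this
        omega
    exact no_two_semi hut hut'' ht''ne.symm h0 h0''
  -- uniformity of outside classes over one side
  have huniform : ∀ (A B : Set V), G.SquareConnected A B →
      (∀ t : W, ¬((J t ∩ A).Nonempty ∧ (J t ∩ B).Nonempty)) →
      2 ≤ {t : W | (J t ∩ A).Nonempty}.ncard →
      ∀ u : W, J u ∩ (A ∪ B) = ∅ →
      (∀ t : W, (J t ∩ A).Nonempty → H.θ u t = 1) ∨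
      (∀ t : W, (J t ∩ A).Nonempty → H.θ u t = -1) := by
    intro A B hsc hNC hA2 u hu
    obtain ⟨t0, ht0, -, -, -⟩ := exists_pair_of_two_le hA2
    have hmemJ : ∀ x ∈ J u, x ∉ A ∪ B := by
      intro x hx hxAB
      have hxm : x ∈ J u ∩ (A ∪ B) := ⟨hx, hxAB⟩
      rw [hu] at hxm
      exact Set.notMem_empty x hxm
    have hut0 : u ≠ t0 := by
      rintro rfl
      obtain ⟨a0, ha0J, ha0A⟩ := ht0
      exact hmemJ a0 ha0J (Or.inl ha0A)
    obtain ⟨x0, hx0⟩ := (hth.1 u).1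
    have key : ∀ t t' : W, (J t ∩ A).Nonempty → (J t' ∩ A).Nonempty →
        H.θ u t = 1 → H.θ u t' = -1 → False := by
      rintro t t' ⟨at1, hat1J, hat1A⟩ ⟨at2, hat2J, hat2A⟩ h1 h2
      have hut : u ≠ t := by
        rintro rfl; exact hmemJ at1 hat1J (Or.inl hat1A)
      have hut' : u ≠ t' := by
        rintro rfl; exact hmemJ at2 hat2J (Or.inl hat2A)
      have e1 := hth.strongly_complete hut h1 x0 hx0 at1 hat1J
      have e2 := hth.strongly_anticomplete hut' h2 x0 hx0 at2 hat2J
      rw [StrongAdj] at e1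
      rw [StrongAntiAdj] at e2
      rcases (hsc.1.2.2.2.2.2.2 x0 (hmemJ x0 hx0)).1 with h' | h'
      · have := h' x0 rfl at2 hat2A
        rw [StrongAdj] at this
        omega
      · have := h' x0 rfl at1 hat1A
        rw [StrongAntiAdj] at this
        omega
    rcases H.range_mem u t0 with h | h | h
    · left
      intro t ht
      rcases H.range_mem u t with h' | h' | h'
      · exact h'
      · exact absurd h' (hnosemi A B hsc hNC hA2 u hu t ht)
      · exact absurd (key t0 t ht0 ht h h') not_false
    · exact absurd h (hnosemi A B hsc hNC hA2 u hu t0 ht0)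
    · right
      intro t ht
      rcases H.range_mem u t with h' | h' | h'
      · exact absurd (key t t0 ht ht0 h' h) not_false
      · exact absurd h' (hnosemi A B hsc hNC hA2 u hu t ht)
      · exact h'
  -- the push-down of squares
  have push : ∀ (A B : Set V), G.SquareConnected A B →
      (∀ t : W, ¬((J t ∩ A).Nonempty ∧ (J t ∩ B).Nonempty)) →
      ∀ P P' : Set W, P.Nonempty → P'.Nonempty →
      P ∪ P' = {t : W | (J t ∩ A).Nonempty} → Disjoint P P' →
      H.SquareMeets ({t : W | (J t ∩ A).Nonempty} ∪ {t : W | (J t ∩ B).Nonempty})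
        P P' := by
    intro A B hsc hNC P P' hP hP' hun hdP
    have hclA := hsc.1.2.2.2.1
    have hclB := hsc.1.2.2.2.2.1
    have hd := hsc.1.2.2.1
    set U : Set V := A ∩ ⋃ t ∈ P, J t with hU
    set U' : Set V := A ∩ ⋃ t ∈ P', J t with hU'
    have hUne : U.Nonempty := by
      obtain ⟨t, htP⟩ := hP
      have : t ∈ {t : W | (J t ∩ A).Nonempty} := by rw [← hun]; exact Or.inl htP
      obtain ⟨a0, ha0J, ha0A⟩ := this
      exact ⟨a0, ha0A, Set.mem_biUnion htP ha0J⟩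
    have hU'ne : U'.Nonempty := by
      obtain ⟨t, htP⟩ := hP'
      have : t ∈ {t : W | (J t ∩ A).Nonempty} := by rw [← hun]; exact Or.inr htP
      obtain ⟨a0, ha0J, ha0A⟩ := this
      exact ⟨a0, ha0A, Set.mem_biUnion htP ha0J⟩
    have hUun : U ∪ U' = A := by
      apply Set.Subset.antisymm
      · rintro a (ha | ha)
        · exact ha.1
        · exact ha.1
      · intro a ha
        obtain ⟨q, hq⟩ := hth.exists_class a
        have hqA : q ∈ P ∪ P' := by
          rw [hun]; exact ⟨a, hq, ha⟩
        rcases hqA with h | h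
        · exact Or.inl ⟨ha, Set.mem_biUnion h hq⟩
        · exact Or.inr ⟨ha, Set.mem_biUnion h hq⟩
    have hUd : Disjoint U U' := by
      rw [Set.disjoint_left]
      rintro a ⟨-, ha1⟩ ⟨-, ha2⟩
      simp only [Set.mem_iUnion] at ha1 ha2
      obtain ⟨t1, ht1P, ht1⟩ := ha1
      obtain ⟨t2, ht2P, ht2⟩ := ha2
      have : t1 = t2 := hth.class_eq ht1 ht2
      exact disj_absurd hdP ht1P (this ▸ ht2P)
    obtain ⟨v1, v2, v3, v4, hsq, hsub, hm1, hm2⟩ := hsc.2.1 U U' hUne hU'ne hUun hUd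
    obtain ⟨z, hzs, hzU⟩ := hm1
    obtain ⟨z', hz's, hz'U'⟩ := hm2
    have hzz' : z ≠ z' := hUd.ne_of_mem hzU hz'U'
    obtain ⟨b3, b4, hb3B, hb4B, nsq⟩ :=
      square_normalize hclA hclB hd hsq hsub hzs hz's hzU.1 hz'U'.1 hzz'
    -- classes of the four corners
    obtain ⟨t1, ht1P, hzt1⟩ : ∃ t1, t1 ∈ P ∧ z ∈ J t1 := by
      have := hzU.2
      simp only [Set.mem_iUnion] at this
      obtain ⟨i, hi, h⟩ := this
      exact ⟨i, hi, h⟩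
    obtain ⟨t2, ht2P, hz't2⟩ : ∃ t2, t2 ∈ P' ∧ z' ∈ J t2 := by
      have := hz'U'.2
      simp only [Set.mem_iUnion] at this
      obtain ⟨i, hi, h⟩ := this
      exact ⟨i, hi, h⟩
    obtain ⟨u3, hu3⟩ := hth.exists_class b3
    obtain ⟨u4, hu4⟩ := hth.exists_class b4
    have ht1A : (J t1 ∩ A).Nonempty := ⟨z, hzt1, hzU.1⟩
    have ht2A : (J t2 ∩ A).Nonempty := ⟨z', hz't2, hz'U'.1⟩
    have hu3B : (J u3 ∩ B).Nonempty := ⟨b3, hu3, hb3B⟩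
    have hu4B : (J u4 ∩ B).Nonempty := ⟨b4, hu4, hb4B⟩
    have ht12 : t1 ≠ t2 := fun h => disj_absurd hdP ht1P (h ▸ ht2P)
    have ht1u3 : t1 ≠ u3 := by rintro rfl; exact hNC t1 ⟨ht1A, hu3B⟩
    have ht1u4 : t1 ≠ u4 := by rintro rfl; exact hNC t1 ⟨ht1A, hu4B⟩
    have ht2u3 : t2 ≠ u3 := by rintro rfl; exact hNC t2 ⟨ht2A, hu3B⟩
    have ht2u4 : t2 ≠ u4 := by rintro rfl; exact hNC t2 ⟨ht2A, hu4B⟩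
    have hu34 : u3 ≠ u4 := by
      rintro rfl
      have hA1 : H.θ t1 u3 = 0 :=
        hth.theta_eq_zero ht1u3 hzt1 hu3 (anti_iff.1 nsq.1).2 hzt1 hu4
          (adj_iff.1 nsq.2.2.2.2.2.symm).2
      have hA2' : H.θ t2 u3 = 0 :=
        hth.theta_eq_zero ht2u3 hz't2 hu4 (anti_iff.1 nsq.2.1).2 hz't2 hu3
          (adj_iff.1 nsq.2.2.2.1).2
      exact no_two_semi ht1u3.symm ht2u3.symm ht12 (theta_zero_comm hA1)
        (theta_zero_comm hA2')
    refine ⟨t1, t2, u3, u4, ⟨?_, ?_, ?_, ?_, ?_, ?_⟩, ?_, ⟨t1, by simp, ht1P⟩,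
      ⟨t2, by simp, ht2P⟩⟩
    · exact hth.anti_down ht1u3 hzt1 hu3 nsq.1
    · exact hth.anti_down ht2u4 hz't2 hu4 nsq.2.1
    · exact hth.adj_down ht12 hzt1 hz't2 nsq.2.2.1
    · exact hth.adj_down ht2u3 hz't2 hu3 nsq.2.2.2.1
    · exact hth.adj_down hu34 hu3 hu4 nsq.2.2.2.2.1
    · exact hth.adj_down ht1u4.symm hu4 hzt1 nsq.2.2.2.2.2
    · rintro y (rfl | rfl | rfl | rfl)
      · exact Or.inl ht1A
      · exact Or.inl ht2A
      · exact Or.inr hu3B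
      · exact Or.inr hu4B
  -- main dichotomy
  by_contra hbig3
  have hA2 : 2 ≤ {t : W | (J t ∩ A).Nonempty}.ncard := by
    by_contra h'
    have h1 : {t : W | (J t ∩ A).Nonempty}.ncard ≤ 1 := by omega
    have h2 := sideSmall B A hsc.swap hNCs h1
    have := Set.ncard_union_le {t : W | (J t ∩ A).Nonempty} {t : W | (J t ∩ B).Nonempty}
    omega
  have hB2 : 2 ≤ {t : W | (J t ∩ B).Nonempty}.ncard := by
    by_contra h'
    have h1 : {t : W | (J t ∩ B).Nonempty}.ncard ≤ 1 := by omega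
    have h2 := sideSmall A B hsc hNC h1
    have := Set.ncard_union_le {t : W | (J t ∩ A).Nonempty} {t : W | (J t ∩ B).Nonempty}
    omega
  -- construct a square-connected pair in H, contradicting laminarity
  apply hlam
  refine ⟨{t : W | (J t ∩ A).Nonempty}, {t : W | (J t ∩ B).Nonempty}, ⟨?_, ?_, ?_⟩⟩
  · -- HPOSC
    refine ⟨?_, ?_, ?_, ?_, ?_, ?_, ?_⟩
    · obtain ⟨t, ht, -, -, -⟩ := exists_pair_of_two_le hA2
      exact ⟨t, ht⟩
    · obtain ⟨t, ht, -, -, -⟩ := exists_pair_of_two_le hB2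
      exact ⟨t, ht⟩
    · rw [Set.disjoint_left]
      intro t ht1 ht2
      exact hNC t ⟨ht1, ht2⟩
    · intro t1 ht1 t2 ht2 hne
      exact hclbar A B hsc hNC t1 t2 ht1 ht2 hne
    · intro t1 ht1 t2 ht2 hne
      exact hclbar B A hsc.swap hNCs t1 t2 ht1 ht2 hne
    · rintro ⟨s, s', hs, -⟩
      rw [hs] at hA2
      simp [Set.ncard_singleton] at hA2
    · intro u hu
      have huA : J u ∩ (A ∪ B) = ∅ := by
        rw [Set.inter_union_distrib_left]
        have h1 : J u ∩ A = ∅ := by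
          by_contra h'
          exact hu (Or.inl (Set.nonempty_iff_ne_empty.2 h'))
        have h2 : J u ∩ B = ∅ := by
          by_contra h'
          exact hu (Or.inr (Set.nonempty_iff_ne_empty.2 h'))
        rw [h1, h2, Set.union_empty]
      have huB : J u ∩ (B ∪ A) = ∅ := by rwa [Set.union_comm] at huA
      constructor
      · rcases huniform A B hsc hNC hA2 u huA with h | h
        · exact Or.inl (fun x hx t ht => by
            simp only [Set.mem_singleton_iff] at hx
            subst hx
            exact h t ht)
        · exact Or.inr (fun x hx t ht => by
            simp only [Set.mem_singleton_iff] at hx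
            subst hx
            exact h t ht)
      · rcases huniform B A hsc.swap hNCs hB2 u huB with h | h
        · exact Or.inl (fun x hx t ht => by
            simp only [Set.mem_singleton_iff] at hx
            subst hx
            exact h t ht)
        · exact Or.inr (fun x hx t ht => by
            simp only [Set.mem_singleton_iff] at hx
            subst hx
            exact h t ht)
  · intro P P' h1 h2 h3 h4
    exact push A B hsc hNC P P' h1 h2 h3 h4
  · intro P P' h1 h2 h3 h4
    have := push B A hsc.swap hNCs P P' h1 h2 h3 h4
    rwa [Set.union_comm] at this

end KeyClaim

end Trigraph

namespace Trigraph

lemma three_le_ncard_of_triple {α : Type} [Finite α] {s : Set α} {a b c : α}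
    (ha : a ∈ s) (hb : b ∈ s) (hc : c ∈ s) (hab : a ≠ b) (hac : a ≠ c) (hbc : b ≠ c) :
    3 ≤ s.ncard := by
  have hsub : ({a, b, c} : Set α) ⊆ s := by
    intro x hx
    simp only [Set.mem_insert_iff, Set.mem_singleton_iff] at hx
    rcases hx with rfl | rfl | rfl <;> assumption
  have h3 : ({a, b, c} : Set α).ncard = 3 := by
    rw [Set.ncard_insert_of_notMem (by simp [hab, hac]),
      Set.ncard_insert_of_notMem (by simp [hbc]), Set.ncard_singleton]
  calc 3 = ({a, b, c} : Set α).ncard := h3.symm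
    _ ≤ s.ncard := Set.ncard_le_ncard hsub s.toFinite

end Trigraph
/-- Let G be a connected non-degenerate trigraph and let G' be an
antithickening of G whose nontrivial preimages are exactly the parts of the
inclusion-maximal square-connected homogeneous pairs of strong cliques of G, each such
pair being the preimage of a semiedge. Then G' is an optimal antithickening of G. -/
theorem contracting_maximal_pairs_is_optimal {V V' : Type} [Fintype V] [Fintype V']
    (G : Trigraph V) (hconn : G.Connected) (hnd : G.NonDegenerate)
    (G' : Trigraph V') (I : V' → Set V) (hthick : G.IsThickening G' I)
    (hbig : ∀ v : V', 2 ≤ (I v).ncard →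
      ∃ A B : Set V, G.MaxSquareConnected A B ∧ (I v = A ∨ I v = B))
    (hmax : ∀ A B : Set V, G.MaxSquareConnected A B →
      ∃ a b : V', G'.SemiAdj a b ∧ I a = A ∧ I b = B) :
    G.OptimalAntithickening G' I := by
  classical
  open Trigraph in
  refine ⟨hthick, Trigraph.canonical_laminar hthick hbig hmax, ?_⟩
  intro W H J hthJ hlamH
  have hWfin : Finite W := by
    have hinj : Function.Injective J := by
      intro w w' h
      by_contra hne
      have hd := hthJ.2.1 w w' hne
      obtain ⟨v, hv⟩ := (hthJ.1 w).1
      exact Trigraph.disj_absurd hd hv (h ▸ hv)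
    exact Finite.of_injective J hinj
  rcases isEmpty_or_nonempty W with hWe | hWne
  · have : Nat.card W = 0 := by simp
    omega
  have halign : ∀ X Y : Set V, G.SquareConnected X Y →
      ∃ a b : V', G'.SemiAdj a b ∧ X ⊆ I a ∧ Y ⊆ I b := by
    intro X Y hsc
    obtain ⟨M1, M2, hmaxM, h1, h2⟩ := hsc.exists_max
    obtain ⟨a, b, hsemi, hIa, hIb⟩ := hmax M1 M2 hmaxM
    exact ⟨a, b, hsemi, hIa ▸ h1, hIb ▸ h2⟩
  have hpuniq : ∀ v' u u' : V', G'.SemiAdj v' u → G'.SemiAdj v' u' → u = u' := by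
    intro v' u u' h1 h2
    by_contra hne
    exact Trigraph.no_two_semi h1.1 h2.1 hne h1.2 h2.2
  have hpex : ∀ v' : V', ∃ u : V', 2 ≤ (I v').ncard → G'.SemiAdj v' u := by
    intro v'
    by_cases h : 2 ≤ (I v').ncard
    · obtain ⟨Am, Bm, hmaxAB, hor⟩ := hbig v' h
      obtain ⟨a, b, hsemi, hIa, hIb⟩ := hmax Am Bm hmaxAB
      obtain ⟨v0, hv0⟩ := (hthick.1 v').1
      rcases hor with he | he
      · have hva : v' = a :=
          hthick.class_eq hv0 (by rw [he, ← hIa] at hv0; exact hv0)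
        exact ⟨b, fun _ => by rw [hva]; exact hsemi⟩
      · have hvb : v' = b :=
          hthick.class_eq hv0 (by rw [he, ← hIb] at hv0; exact hv0)
        exact ⟨a, fun _ => by rw [hvb]; exact hsemi.symm⟩
    · exact ⟨v', fun h' => absurd h' h⟩
  choose p hpsemi using hpex
  have hbigpair : ∀ v' : V', 2 ≤ (I v').ncard →
      G.MaxSquareConnected (I v') (I (p v')) ∨
      G.MaxSquareConnected (I (p v')) (I v') := by
    intro v' h
    obtain ⟨Am, Bm, hmaxAB, hor⟩ := hbig v' h
    obtain ⟨a, b, hsemi, hIa, hIb⟩ := hmax Am Bm hmaxAB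
    obtain ⟨v0, hv0⟩ := (hthick.1 v').1
    rcases hor with he | he
    · have hva : v' = a :=
        hthick.class_eq hv0 (by rw [he, ← hIa] at hv0; exact hv0)
      have hpb : p v' = b :=
        hpuniq v' (p v') b (hpsemi v' h) (by rw [hva]; exact hsemi)
      left
      rw [he, hpb, hIb]
      exact hmaxAB
    · have hvb : v' = b :=
        hthick.class_eq hv0 (by rw [he, ← hIb] at hv0; exact hv0)
      have hpa : p v' = a :=
        hpuniq v' (p v') a (hpsemi v' h) (by rw [hvb]; exact hsemi.symm)
      right
      rw [he, hpa, hIa]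
      exact hmaxAB
  have hpbig : ∀ v' : V', 2 ≤ (I v').ncard → 2 ≤ (I (p v')).ncard := by
    intro v' h
    rcases hbigpair v' h with hm | hm
    · exact hm.1.two_le.2
    · exact hm.1.two_le.1
  have hpp : ∀ v' : V', 2 ≤ (I v').ncard → p (p v') = v' := by
    intro v' h
    exact hpuniq (p v') (p (p v')) v' (hpsemi _ (hpbig v' h)) (hpsemi v' h).symm
  have hpne : ∀ v' : V', 2 ≤ (I v').ncard → p v' ≠ v' := fun v' h =>
    ((hpsemi v' h).1).symm
  -- the key claim, per big class
  have hkey : ∀ v' : V', 2 ≤ (I v').ncard →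
      {w : W | (J w ∩ (I v' ∪ I (p v'))).Nonempty}.ncard ≤ 2 := by
    intro v' h
    rcases hbigpair v' h with hm | hm
    · refine Trigraph.key_claim hthJ hlamH hm.1 ?_
      rintro X Y hsc ⟨⟨x, hxX, hxA⟩, ⟨y, hyX, hyB⟩⟩
      obtain ⟨a, b, hsemi, hsub1, -⟩ := halign X Y hsc
      have h1 : a = v' := hthick.class_eq (hsub1 hxX) hxA
      have h2 : a = p v' := hthick.class_eq (hsub1 hyX) hyB
      exact hpne v' h (h2 ▸ h1.symm ▸ rfl)
    · have hthis := Trigraph.key_claim hthJ hlamH hm.1 ?_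
      · have hsets : {w : W | (J w ∩ (I (p v') ∪ I v')).Nonempty} =
            {w : W | (J w ∩ (I v' ∪ I (p v'))).Nonempty} := by
          ext w
          rw [Set.mem_setOf_eq, Set.mem_setOf_eq, Set.union_comm]
        rwa [hsets] at hthis
      · rintro X Y hsc ⟨⟨x, hxX, hxA⟩, ⟨y, hyX, hyB⟩⟩
        obtain ⟨a, b, hsemi, hsub1, -⟩ := halign X Y hsc
        have h1 : a = p v' := hthick.class_eq (hsub1 hxX) hxA
        have h2 : a = v' := hthick.class_eq (hsub1 hyX) hyB
        exact hpne v' h (h1 ▸ h2.symm ▸ rfl)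
  -- now the counting
  choose κI hκI using hthick.exists_class
  choose repJ hrepJ using fun w : W => (hthJ.1 w).1
  set W1 : Set W := {w | ∃ v', 2 ≤ (I v').ncard ∧ (J w ∩ I v').Nonempty} with hW1
  have hmateex : ∀ w : W, ∃ v' : V',
      w ∈ W1 → 2 ≤ (I v').ncard ∧ (J w ∩ I v').Nonempty := by
    intro w
    by_cases h : w ∈ W1
    · obtain ⟨v', hv'⟩ := h
      exact ⟨v', fun _ => hv'⟩
    · exact ⟨κI (repJ w), fun h' => absurd h' h⟩
  choose mate hmate using hmateex
  -- ordering gadget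
  have hordinj : Function.Injective (fun v' : V' => (Fintype.equivFin V' v' : ℕ)) := by
    intro a b h
    simpa using (Fintype.equivFin V').injective (Fin.val_injective h)
  set ordfn : V' → ℕ := fun v' => (Fintype.equivFin V' v' : ℕ) with hordfn
  set lo : V' → V' := fun v' => if ordfn v' ≤ ordfn (p v') then v' else p v' with hlo
  set hi : V' → V' := fun v' => if ordfn v' ≤ ordfn (p v') then p v' else v' with hhi
  have hord_ne : ∀ v' : V', 2 ≤ (I v').ncard → ordfn v' ≠ ordfn (p v') := by
    intro v' h he
    exact hpne v' h (hordinj he).symm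
  have hlop : ∀ v' : V', 2 ≤ (I v').ncard → lo (p v') = lo v' ∧ hi (p v') = hi v' := by
    intro v' h
    have hne := hord_ne v' h
    simp only [hlo, hhi, hpp v' h]
    by_cases h1 : ordfn v' ≤ ordfn (p v')
    · have h2 : ¬(ordfn (p v') ≤ ordfn v') := by omega
      rw [if_pos h1, if_neg h2, if_pos h1, if_neg h2]
      exact ⟨rfl, rfl⟩
    · have h2 : ordfn (p v') ≤ ordfn v' := by omega
      rw [if_neg h1, if_pos h2, if_neg h1, if_pos h2]
      exact ⟨rfl, rfl⟩
  have hlomem : ∀ v' : V', (lo v' = v' ∨ lo v' = p v') ∧ (hi v' = v' ∨ hi v' = p v') := by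
    intro v'
    simp only [hlo, hhi]
    by_cases h1 : ordfn v' ≤ ordfn (p v')
    · rw [if_pos h1, if_pos h1]
      exact ⟨Or.inl rfl, Or.inr rfl⟩
    · rw [if_neg h1, if_neg h1]
      exact ⟨Or.inr rfl, Or.inl rfl⟩
  have hlonehi : ∀ v' : V', 2 ≤ (I v').ncard → lo v' ≠ hi v' := by
    intro v' h
    simp only [hlo, hhi]
    by_cases h1 : ordfn v' ≤ ordfn (p v')
    · rw [if_pos h1, if_pos h1]
      exact (hpne v' h).symm
    · rw [if_neg h1, if_neg h1]
      exact hpne v' h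
  have hlobig : ∀ v' : V', 2 ≤ (I v').ncard →
      2 ≤ (I (lo v')).ncard ∧ 2 ≤ (I (hi v')).ncard := by
    intro v' h
    rcases (hlomem v').1 with h1 | h1 <;> rcases (hlomem v').2 with h2 | h2 <;>
      rw [h1, h2] <;> exact ⟨by first | exact h | exact hpbig v' h,
        by first | exact h | exact hpbig v' h⟩
  set Cset : V' → Set W := fun v' => {w | (J w ∩ (I v' ∪ I (p v'))).Nonempty} with hCsetdef
  have hCsetp : ∀ v' : V', 2 ≤ (I v').ncard → Cset (p v') = Cset v' := by
    intro v' h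
    ext w
    simp only [hCsetdef, Set.mem_setOf_eq]
    rw [hpp v' h, Set.union_comm]
  have hCkey : ∀ v' : V', 2 ≤ (I v').ncard → (Cset v').ncard ≤ 2 := fun v' h => hkey v' h
  -- pair coherence
  have hpairco : ∀ v1 v2 z : V', 2 ≤ (I v1).ncard → 2 ≤ (I v2).ncard →
      (z = v1 ∨ z = p v1) → (z = v2 ∨ z = p v2) →
      lo v1 = lo v2 ∧ hi v1 = hi v2 ∧ Cset v1 = Cset v2 := by
    intro v1 v2 z h1 h2 hz1 hz2
    have hv2 : v2 = v1 ∨ v2 = p v1 := by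
      rcases hz1 with rfl | rfl
      · rcases hz2 with h' | h'
        · exact Or.inl h'.symm
        · right
          rw [← hpp v2 h2, ← h']
      · rcases hz2 with h' | h'
        · exact Or.inr h'.symm
        · left
          rw [← hpp v2 h2, ← h', hpp v1 h1]
    rcases hv2 with rfl | rfl
    · exact ⟨rfl, rfl, rfl⟩
    · exact ⟨(hlop v1 h1).1.symm, (hlop v1 h1).2.symm, (hCsetp v1 h1).symm⟩
  -- a "first" choice function on sets of classes
  have hfwex : ∀ s : Set W, ∃ w : W, s.Nonempty → w ∈ s := by
    intro s
    rcases s.eq_empty_or_nonempty with h | h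
    · exact ⟨Classical.arbitrary W, fun h' => absurd h' (by rw [h]; simp)⟩
    · exact ⟨h.choose, fun _ => h.choose_spec⟩
  choose firstW hfirstW using hfwex
  -- the injection
  set f : W → V' := fun w =>
    if w ∈ W1 then
      (if w = firstW (Cset (mate w)) then lo (mate w) else hi (mate w))
    else κI (repJ w) with hf
  have hfbig : ∀ w : W, w ∈ W1 → 2 ≤ (I (f w)).ncard := by
    intro w hw
    have hm := hmate w hw
    simp only [hf, if_pos hw]
    by_cases h' : w = firstW (Cset (mate w))
    · rw [if_pos h']
      exact (hlobig (mate w) hm.1).1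
    · rw [if_neg h']
      exact (hlobig (mate w) hm.1).2
  have hfsmall : ∀ w : W, w ∉ W1 → ¬(2 ≤ (I (f w)).ncard) := by
    intro w hw hbig'
    simp only [hf, if_neg hw] at hbig'
    exact hw ⟨κI (repJ w), hbig', repJ w, hrepJ w, hκI (repJ w)⟩
  have hfmem : ∀ w : W, w ∈ W1 → f w = lo (mate w) ∨ f w = hi (mate w) := by
    intro w hw
    simp only [hf, if_pos hw]
    by_cases h' : w = firstW (Cset (mate w))
    · rw [if_pos h']; exact Or.inl rfl
    · rw [if_neg h']; exact Or.inr rfl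
  have hmemCset : ∀ w : W, w ∈ W1 → w ∈ Cset (mate w) := by
    intro w hw
    obtain ⟨x, hx1, hx2⟩ := (hmate w hw).2
    exact ⟨x, hx1, Or.inl hx2⟩
  have hinjf : Function.Injective f := by
    intro w w' heq
    by_cases hw : w ∈ W1 <;> by_cases hw' : w' ∈ W1
    · -- both big
      have hm := hmate w hw
      have hm' := hmate w' hw'
      have hz1 : f w = lo (mate w) ∨ f w = hi (mate w) := hfmem w hw
      have hz2 : f w' = lo (mate w') ∨ f w' = hi (mate w') := hfmem w' hw'
      have hz1' : f w = mate w ∨ f w = p (mate w) := by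
        rcases hz1 with h | h
        · rw [h]; exact (hlomem (mate w)).1
        · rw [h]; exact (hlomem (mate w)).2
      have hz2' : f w = mate w' ∨ f w = p (mate w') := by
        rw [heq]
        rcases hz2 with h | h
        · rw [h]; exact (hlomem (mate w')).1
        · rw [h]; exact (hlomem (mate w')).2
      obtain ⟨hloeq, hhieq, hCeq⟩ :=
        hpairco (mate w) (mate w') (f w) hm.1 hm'.1 hz1' hz2'
      by_cases hb1 : w = firstW (Cset (mate w)) <;>
        by_cases hb2 : w' = firstW (Cset (mate w'))
      · rw [hb1, hb2, hCeq]
      · -- w is first, w' is not : lo = hi contradiction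
        exfalso
        have e1 : f w = lo (mate w) := by simp only [hf, if_pos hw, if_pos hb1]
        have e2 : f w' = hi (mate w') := by simp only [hf, if_pos hw', if_neg hb2]
        apply hlonehi (mate w) hm.1
        rw [e1, e2] at heq
        rw [heq, hhieq]
      · exfalso
        have e1 : f w = hi (mate w) := by simp only [hf, if_pos hw, if_neg hb1]
        have e2 : f w' = lo (mate w') := by simp only [hf, if_pos hw', if_pos hb2]
        apply hlonehi (mate w) hm.1
        rw [e1, e2] at heq
        rw [hloeq]
        exact heq.symm
      · -- neither is first: three distinct elements of Cset
        by_contra hne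
        have hwC : w ∈ Cset (mate w) := hmemCset w hw
        have hw'C : w' ∈ Cset (mate w) := by
          rw [hCeq]; exact hmemCset w' hw'
        have hfst : firstW (Cset (mate w)) ∈ Cset (mate w) :=
          hfirstW (Cset (mate w)) ⟨w, hwC⟩
        have h3 := Trigraph.three_le_ncard_of_triple hwC hw'C hfst hne hb1
          (by rw [hCeq]; exact hb2)
        have h2 := hCkey (mate w) hm.1
        omega
    · exact absurd (heq ▸ hfbig w hw) (hfsmall w' hw')
    · exact absurd (heq.symm ▸ hfbig w' hw') (hfsmall w hw)
    · -- both small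
      have e1 : f w = κI (repJ w) := by simp only [hf, if_neg hw]
      have e2 : f w' = κI (repJ w') := by simp only [hf, if_neg hw']
      have hsmall : ¬(2 ≤ (I (f w)).ncard) := hfsmall w hw
      have hrr : repJ w = repJ w' := by
        by_contra hne
        apply hsmall
        refine Trigraph.two_le_ncard_of_pair ?_ ?_ hne
        · rw [e1]; exact hκI (repJ w)
        · rw [heq, e2]; exact hκI (repJ w')
      exact hthJ.class_eq (hrepJ w) (hrr ▸ hrepJ w')
  exact Nat.card_le_card_of_injective f hinjf
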